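/- arXiv:1207.0944 — 10 statements merged into one kernel-verified Lean document; each statement's English description precedes it below -/
import Mathlib

section
/- If a function f on an open subset Ω of ℝ^n is convex on L ∩ Ω for every straight line L (i.e., for all x₁, x₂ ∈ Ω and λ ∈ [0,1] with λx₁+(1-λ)x₂ ∈ Ω one has f(λx₁+(1-λ)x₂) ≤ λf(x₁)+(1-λ)f(x₂)), then f is convex on Ω: for any convex combination x = λ₁x₁+⋯+λₖxₖ with all xᵢ ∈ Ω and x ∈ Ω, one has f(x) ≤ λ₁f(x₁)+⋯+λₖf(xₖ). -/
open scoped BigOperators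

/-- Jensen-type convexity of `f` on an arbitrary subset `s`: the Jensen inequality
holds for every convex combination of points of `s` whose result lies in `s`. -/
def JConvexOn {E : Type*} [AddCommGroup E] [Module ℝ E] (s : Set E) (f : E → ℝ) : Prop :=
  ∀ (k : ℕ) (x : Fin k → E) (w : Fin k → ℝ),
    (∀ i, x i ∈ s) → (∀ i, 0 ≤ w i) → (∑ i, w i) = 1 →
    (∑ i, w i • x i) ∈ s →
    f (∑ i, w i • x i) ≤ ∑ i, w i * f (x i)

/-- If a function on an open subset `Ω ⊆ ℝⁿ` is convex on `L ∩ Ω` for every straight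
line `L`, then it is convex on `Ω`. -/
theorem convex_of_line_convex_of_isOpen {n : ℕ}
    (Ω : Set (EuclideanSpace ℝ (Fin n))) (hΩ : IsOpen Ω)
    (f : EuclideanSpace ℝ (Fin n) → ℝ)
    (hline : ∀ x₁ ∈ Ω, ∀ x₂ ∈ Ω, ∀ l : ℝ, 0 ≤ l → l ≤ 1 →
      l • x₁ + (1 - l) • x₂ ∈ Ω →
      f (l • x₁ + (1 - l) • x₂) ≤ l * f x₁ + (1 - l) * f x₂) :
    JConvexOn Ω f := by
  intro k x w hx hw hw1 hmem
  set xbar := ∑ i, w i • x i with hxbar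
  -- a ball around xbar inside Ω
  obtain ⟨ε, hε, hball⟩ := Metric.isOpen_iff.mp hΩ xbar hmem
  -- f is convex on this ball
  have hconv : ConvexOn ℝ (Metric.ball xbar ε) f := by
    refine ⟨convex_ball _ _, ?_⟩
    intro a ha b hb μ ν hμ hν hμν
    have hν' : ν = 1 - μ := by linarith
    subst hν'
    exact hline a (hball ha) b (hball hb) μ hμ (by linarith)
      (hball (convex_ball _ _ ha hb hμ (by linarith) (by ring)))
  -- choose a small shrinking parameter δ
  set C : ℝ := ∑ i, ‖x i - xbar‖ with hC
  have hC0 : 0 ≤ C := Finset.sum_nonneg fun i _ => norm_nonneg _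
  set δ : ℝ := min 1 (ε / (2 * (C + 1))) with hδdef
  have hδpos : 0 < δ := lt_min one_pos (by positivity)
  have hδ1 : δ ≤ 1 := min_le_left _ _
  have hδC : δ * C < ε := by
    have h1 : δ ≤ ε / (2 * (C + 1)) := min_le_right _ _
    have h2 : δ * C ≤ (ε / (2 * (C + 1))) * C :=
      mul_le_mul_of_nonneg_right h1 hC0
    have h3 : (ε / (2 * (C + 1))) * C < ε := by
      rw [div_mul_eq_mul_div, div_lt_iff₀ (by positivity)]
      nlinarith
    linarith
  -- shrunk points
  set y : Fin k → EuclideanSpace ℝ (Fin n) := fun i => δ • x i + (1 - δ) • xbar with hy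
  have hyball : ∀ i, y i ∈ Metric.ball xbar ε := by
    intro i
    have : y i - xbar = δ • (x i - xbar) := by
      simp only [hy]
      module
    rw [Metric.mem_ball, dist_eq_norm, this, norm_smul]
    have hile : ‖x i - xbar‖ ≤ C :=
      Finset.single_le_sum (f := fun j => ‖x j - xbar‖)
        (fun j _ => norm_nonneg _) (Finset.mem_univ i)
    calc ‖δ‖ * ‖x i - xbar‖ = δ * ‖x i - xbar‖ := by
          rw [Real.norm_of_nonneg hδpos.le]
      _ ≤ δ * C := by gcongr
      _ < ε := hδC
  -- the shrunk points have the same barycenter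
  have hsum : ∑ i, w i • y i = xbar := by
    simp only [hy, smul_add, Finset.sum_add_distrib, smul_smul]
    rw [← Finset.sum_smul]
    have h1 : ∀ i ∈ Finset.univ, (w i * δ) • x i = δ • (w i • x i) := by
      intro i _
      rw [mul_comm, ← smul_smul]
    rw [Finset.sum_congr rfl h1, ← Finset.smul_sum, ← hxbar]
    have hw' : ∑ i, w i * (1 - δ) = 1 - δ := by
      rw [← Finset.sum_mul, hw1, one_mul]
    rw [hw']
    module
  -- Jensen on the ball
  have hJ : f xbar ≤ ∑ i, w i * f (y i) := by
    have := hconv.map_sum_le (t := Finset.univ) (p := y)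
      (fun i _ => hw i) hw1 (fun i _ => hyball i)
    rwa [hsum] at this
  -- the line hypothesis bounds f (y i)
  have hyi : ∀ i, f (y i) ≤ δ * f (x i) + (1 - δ) * f xbar := by
    intro i
    exact hline (x i) (hx i) xbar hmem δ hδpos.le hδ1 (hball (hyball i))
  have hstep : ∑ i, w i * f (y i) ≤ δ * (∑ i, w i * f (x i)) + (1 - δ) * f xbar := by
    calc ∑ i, w i * f (y i)
        ≤ ∑ i, w i * (δ * f (x i) + (1 - δ) * f xbar) := by
          apply Finset.sum_le_sum
          intro i _
          exact mul_le_mul_of_nonneg_left (hyi i) (hw i)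
      _ = δ * (∑ i, w i * f (x i)) + (1 - δ) * ((∑ i, w i) * f xbar) := by
          have h1 : ∑ i, w i * (δ * f (x i)) = δ * ∑ i, w i * f (x i) := by
            rw [Finset.mul_sum]
            exact Finset.sum_congr rfl fun i _ => by ring
          have h2 : ∑ i, w i * ((1 - δ) * f xbar)
              = (1 - δ) * ((∑ i, w i) * f xbar) := by
            rw [Finset.sum_mul, Finset.mul_sum]
            exact Finset.sum_congr rfl fun i _ => by ring
          simp only [mul_add, Finset.sum_add_distrib, h1, h2]
      _ = δ * (∑ i, w i * f (x i)) + (1 - δ) * f xbar := by rw [hw1, one_mul]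
  have hfinal : f xbar ≤ δ * (∑ i, w i * f (x i)) + (1 - δ) * f xbar :=
    le_trans hJ hstep
  -- divide by δ > 0
  nlinarith [hfinal]
end

section
/- A function on an open subset Ω of ℝ^n is strictly convex if and only if it is convex and strictly locally convex (i.e., every point of Ω has a ball neighborhood on which the restriction of f is strictly convex). -/
open scoped BigOperators

/-- Strict Jensen-type convexity of `f` on an arbitrary subset `s`. -/
def StrictJConvexOn {E : Type*} [AddCommGroup E] [Module ℝ E] (s : Set E) (f : E → ℝ) : Prop :=
  ∀ (k : ℕ) (x : Fin k → E) (w : Fin k → ℝ),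
    (∀ i, x i ∈ s) → (∀ i, 0 < w i) → (∀ i, w i < 1) → (∑ i, w i) = 1 →
    (∑ i, w i • x i) ∈ s →
    (∀ i, x i ≠ ∑ i, w i • x i) →
    f (∑ i, w i • x i) < ∑ i, w i * f (x i)

/-- Strict Jensen convexity implies (non-strict) Jensen convexity. -/
lemma StrictJConvexOn.jConvexOn {E : Type*} [AddCommGroup E] [Module ℝ E]
    {s : Set E} {f : E → ℝ} (h : StrictJConvexOn s f) : JConvexOn s f := by
  classical
  intro k x w hx hw hsum hb
  set b : E := ∑ i, w i • x i with hbdef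
  set J : Finset (Fin k) := Finset.univ.filter (fun i => x i ≠ b ∧ 0 < w i) with hJdef
  set T : ℝ := ∑ i ∈ J, w i with hTdef
  -- off J, terms behave like `b`
  have hoff : ∀ i ∈ Finset.univ \ J, w i • x i = w i • b := by
    intro i hi
    simp only [Finset.mem_sdiff, hJdef, Finset.mem_filter, Finset.mem_univ, true_and,
      not_and_or, not_not, not_lt] at hi
    rcases hi with h1 | h1
    · rw [h1]
    · have : w i = 0 := le_antisymm h1 (hw i)
      simp [this]
  have hofff : ∀ i ∈ Finset.univ \ J, w i * f (x i) = w i * f b := by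
    intro i hi
    simp only [Finset.mem_sdiff, hJdef, Finset.mem_filter, Finset.mem_univ, true_and,
      not_and_or, not_not, not_lt] at hi
    rcases hi with h1 | h1
    · rw [h1]
    · have : w i = 0 := le_antisymm h1 (hw i)
      simp [this]
  have hTcompl : ∑ i ∈ Finset.univ \ J, w i = 1 - T := by
    have := Finset.sum_sdiff_eq_sub (f := w) (Finset.subset_univ J)
    rw [hsum] at this
    rw [this, hTdef]
  have hsplit : ∑ i ∈ J, w i • x i = T • b := by
    have h1 : ∑ i ∈ J, w i • x i + ∑ i ∈ Finset.univ \ J, w i • x i = b := by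
      rw [hbdef, add_comm, Finset.sum_sdiff (Finset.subset_univ J)]
    rw [Finset.sum_congr rfl hoff, ← Finset.sum_smul, hTcompl] at h1
    have h2 : ∑ i ∈ J, w i • x i = b - (1 - T) • b := eq_sub_of_add_eq h1
    rw [h2, sub_smul, one_smul, sub_sub_cancel]
  have hsplitf : ∑ i, w i * f (x i) = ∑ i ∈ J, w i * f (x i) + (1 - T) * f b := by
    rw [← Finset.sum_sdiff (Finset.subset_univ J), Finset.sum_congr rfl hofff,
      ← Finset.sum_mul, hTcompl]
    ring
  by_cases hJe : J = ∅
  · have hT0' : T = 0 := by rw [hTdef, hJe]; simp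
    rw [hsplitf, hT0', hJe]
    simp
  · have hJne : J.Nonempty := Finset.nonempty_iff_ne_empty.mpr hJe
    have hwJ : ∀ i ∈ J, 0 < w i := by
      intro i hi
      simp only [hJdef, Finset.mem_filter] at hi
      exact hi.2.2
    have hxJ : ∀ i ∈ J, x i ≠ b := by
      intro i hi
      simp only [hJdef, Finset.mem_filter] at hi
      exact hi.2.1
    have hT0 : 0 < T := Finset.sum_pos hwJ hJne
    -- each weight on J is strictly less than T
    have hwlt : ∀ i ∈ J, w i < T := by
      intro j hj
      rcases lt_or_eq_of_le (Finset.single_le_sum (fun i hi => (hwJ i hi).le) hj) with h | h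
      · exact h
    -- if w j = T then J = {j} and x j = b, contradiction
      · exfalso
        have hz : ∑ i ∈ J.erase j, w i = 0 := by
          have := Finset.add_sum_erase J w hj
          rw [← hTdef] at this
          linarith [this, h]
        have hJj : J = {j} := by
          have he : J.erase j = ∅ := by
            by_contra hne
            have : (0:ℝ) < ∑ i ∈ J.erase j, w i :=
              Finset.sum_pos (fun i hi => hwJ i (Finset.mem_of_mem_erase hi))
                (Finset.nonempty_iff_ne_empty.mpr hne)
            linarith
          apply Finset.eq_singleton_iff_unique_mem.mpr
          refine ⟨hj, fun y hy => ?_⟩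
          by_contra hyne
          exact (Finset.eq_empty_iff_forall_notMem.mp he y)
            (Finset.mem_erase.mpr ⟨hyne, hy⟩)
        have hxb : x j = b := by
          have h2 : w j • x j = T • b := by
            rw [← hsplit, hJj, Finset.sum_singleton]
          rw [h] at h2
          have := congrArg (fun v => T⁻¹ • v) h2
          simpa [smul_smul, ← hTdef, inv_mul_cancel₀ hT0.ne'] using this
        exact hxJ j hj hxb
    -- reindex J by Fin J.card
    set m : ℕ := J.card with hm
    set e : Fin m ≃ {i // i ∈ J} := J.equivFin.symm with he
    set x' : Fin m → E := fun j => x (e j) with hx'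
    set w' : Fin m → ℝ := fun j => w (e j) / T with hw'
    have hsrE : ∀ g : Fin k → E, ∑ j : Fin m, g (e j) = ∑ i ∈ J, g i := by
      intro g
      rw [Equiv.sum_comp e (fun a => g a), Finset.sum_coe_sort J g]
    have hsrR : ∀ g : Fin k → ℝ, ∑ j : Fin m, g (e j) = ∑ i ∈ J, g i := by
      intro g
      rw [Equiv.sum_comp e (fun a => g a), Finset.sum_coe_sort J g]
    have hw'sum : ∑ j, w' j = 1 := by
      rw [hw']
      simp only [div_eq_inv_mul]
      rw [← Finset.mul_sum, hsrR w, ← hTdef, inv_mul_cancel₀ hT0.ne']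
    have hbary : ∑ j, w' j • x' j = b := by
      have : ∀ j : Fin m, w' j • x' j = T⁻¹ • (w (e j) • x (e j)) := by
        intro j
        simp only [hw', hx', div_eq_inv_mul, mul_smul]
      rw [Finset.sum_congr rfl (fun j _ => this j), ← Finset.smul_sum,
        hsrE (fun i => w i • x i), hsplit, smul_smul,
        inv_mul_cancel₀ hT0.ne', one_smul]
    have hkey := h m x' w' (fun j => hx (e j))
      (fun j => div_pos (hwJ _ (e j).2) hT0)
      (fun j => (div_lt_one hT0).mpr (hwlt _ (e j).2))
      hw'sum (by rw [hbary]; exact hb)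
      (by rw [hbary]; exact fun j => hxJ _ (e j).2)
    rw [hbary] at hkey
    have hfs : ∑ j, w' j * f (x' j) = T⁻¹ * ∑ i ∈ J, w i * f (x i) := by
      have : ∀ j : Fin m, w' j * f (x' j) = T⁻¹ * (w (e j) * f (x (e j))) := by
        intro j
        simp only [hw', hx']; ring
      rw [Finset.sum_congr rfl (fun j _ => this j), ← Finset.mul_sum,
        hsrR (fun i => w i * f (x i))]
    rw [hfs] at hkey
    have h2 : T * f b < ∑ i ∈ J, w i * f (x i) := by
      have := (mul_lt_mul_iff_right₀ hT0).mpr hkey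
      rwa [← mul_assoc, mul_inv_cancel₀ hT0.ne', one_mul] at this
    rw [hsplitf]
    linarith

/-- A function on an open subset `Ω ⊆ ℝⁿ` is strictly convex if and only if it is convex
and strictly locally convex. -/
theorem strictConvex_iff_convex_and_strictLocallyConvex {n : ℕ}
    (Ω : Set (EuclideanSpace ℝ (Fin n))) (hΩ : IsOpen Ω)
    (f : EuclideanSpace ℝ (Fin n) → ℝ) :
    StrictJConvexOn Ω f ↔
      JConvexOn Ω f ∧
        ∀ x ∈ Ω, ∃ ε > (0 : ℝ), StrictJConvexOn (Metric.ball x ε ∩ Ω) f := by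
  constructor
  · intro h
    refine ⟨h.jConvexOn, fun x hx => ⟨1, one_pos, ?_⟩⟩
    intro k y w hy hw hw1 hsum hb hne
    exact h k y w (fun i => (hy i).2) hw hw1 hsum hb.2 hne
  · rintro ⟨hconv, hloc⟩
    intro k x w hx hw hw1 hsum hb hne
    set b : EuclideanSpace ℝ (Fin n) := ∑ i, w i • x i with hbdef
    obtain ⟨ε, hε, hstrict⟩ := hloc b hb
    obtain ⟨δ, hδ, hδΩ⟩ := Metric.isOpen_iff.mp hΩ b hb
    set r : ℝ := min ε δ with hr
    have hr0 : 0 < r := lt_min hε hδ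
    set C : ℝ := 1 + ∑ i, ‖x i - b‖ with hC
    have hC0 : 0 < C := by
      have : (0:ℝ) ≤ ∑ i, ‖x i - b‖ := Finset.sum_nonneg fun i _ => norm_nonneg _
      linarith
    have hCi : ∀ i, ‖x i - b‖ < C := by
      intro i
      have h1 : ‖x i - b‖ ≤ ∑ j, ‖x j - b‖ :=
        Finset.single_le_sum (f := fun j => ‖x j - b‖) (fun j _ => norm_nonneg _)
          (Finset.mem_univ i)
      linarith
    set t : ℝ := min (r / C) (1 / 2) with ht
    have ht0 : 0 < t := lt_min (div_pos hr0 hC0) one_half_pos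
    have ht1 : t < 1 := lt_of_le_of_lt (min_le_right _ _) (by norm_num)
    have htr : ∀ i, t * ‖x i - b‖ < r := by
      intro i
      calc t * ‖x i - b‖ ≤ (r / C) * ‖x i - b‖ := by
            apply mul_le_mul_of_nonneg_right (min_le_left _ _) (norm_nonneg _)
        _ < (r / C) * C := by
            exact mul_lt_mul_of_pos_left (hCi i) (div_pos hr0 hC0)
        _ = r := div_mul_cancel₀ r hC0.ne'
    set y : Fin k → EuclideanSpace ℝ (Fin n) := fun i => (1 - t) • b + t • x i with hy
    have hyball : ∀ i, y i ∈ Metric.ball b ε ∩ Ω := by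
      intro i
      have hdist : dist (y i) b = t * ‖x i - b‖ := by
        rw [dist_eq_norm, hy]
        have : (1 - t) • b + t • x i - b = t • (x i - b) := by
          rw [smul_sub, sub_smul, one_smul]; abel
        rw [this, norm_smul, Real.norm_eq_abs, abs_of_pos ht0]
      constructor
      · rw [Metric.mem_ball, hdist]
        exact lt_of_lt_of_le (htr i) (min_le_left _ _)
      · apply hδΩ
        rw [Metric.mem_ball, hdist]
        exact lt_of_lt_of_le (htr i) (min_le_right _ _)
    have hybary : ∑ i, w i • y i = b := by
      rw [hy]
      simp only [smul_add, smul_smul]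
      rw [Finset.sum_add_distrib]
      have h1 : ∑ i, (w i * (1 - t)) • b = (1 - t) • b := by
        rw [← Finset.sum_smul, ← Finset.sum_mul, hsum, one_mul]
      have h2 : ∑ i, (w i * t) • x i = t • b := by
        have : ∀ i, (w i * t) • x i = t • (w i • x i) := by
          intro i; rw [smul_smul, mul_comm]
        rw [Finset.sum_congr rfl (fun i _ => this i), ← Finset.smul_sum, ← hbdef]
      rw [h1, h2, ← add_smul]
      norm_num
    have hyne : ∀ i, y i ≠ b := by
      intro i hcontra
      apply hne i
      have : t • (x i - b) = 0 := by
        have h3 : y i - b = t • (x i - b) := by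
          rw [hy]; simp only
          rw [smul_sub, sub_smul, one_smul]; abel
        rw [← h3, hcontra, sub_self]
      have := smul_eq_zero.mp this
      rcases this with h | h
      · exact absurd h ht0.ne'
      · rw [sub_eq_zero] at h; exact h
    have hkey := hstrict k y w hyball hw hw1 hsum
      (by rw [hybary]; exact ⟨Metric.mem_ball_self hε, hb⟩)
      (by rw [hybary]; exact hyne)
    rw [hybary] at hkey
    -- f (y i) ≤ (1 - t) * f b + t * f (x i)
    have hyf : ∀ i, f (y i) ≤ (1 - t) * f b + t * f (x i) := by
      intro i
      have h2pt := hconv 2 ![b, x i] ![1 - t, t]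
        (by intro j; fin_cases j <;> simp [hb, hx i])
        (by intro j; fin_cases j <;> simp [ht0.le, ht1.le])
        (by simp [Fin.sum_univ_two])
        (by
          have : ∑ j, (![1 - t, t] j) • (![b, x i] j) = y i := by
            simp [Fin.sum_univ_two, hy]
          rw [this]; exact (hyball i).2)
      have heq : ∑ j, (![1 - t, t] j) • (![b, x i] j) = y i := by
        simp [Fin.sum_univ_two, hy]
      rw [heq, Fin.sum_univ_two] at h2pt
      simpa using h2pt
    have hfin : ∑ i, w i * f (y i) ≤ (1 - t) * f b + t * ∑ i, w i * f (x i) := by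
      calc ∑ i, w i * f (y i) ≤ ∑ i, w i * ((1 - t) * f b + t * f (x i)) :=
            Finset.sum_le_sum (fun i _ => mul_le_mul_of_nonneg_left (hyf i) (hw i).le)
        _ = ∑ i, ((1 - t) * f b * w i + t * (w i * f (x i))) := by
            apply Finset.sum_congr rfl
            intro i _
            ring
        _ = (1 - t) * f b * (∑ i, w i) + t * ∑ i, w i * f (x i) := by
            rw [Finset.sum_add_distrib, ← Finset.mul_sum, ← Finset.mul_sum]
        _ = (1 - t) * f b + t * ∑ i, w i * f (x i) := by rw [hsum, mul_one]
    have hlt : f b < (1 - t) * f b + t * ∑ i, w i * f (x i) := lt_of_lt_of_le hkey hfin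
    have : t * f b < t * ∑ i, w i * f (x i) := by linarith
    exact lt_of_mul_lt_mul_left this ht0.le
end

section
/- If a function f on a subset Ω ⊆ ℝ^n is locally convex (each point has a ball neighborhood B such that f restricted to B ∩ Ω is convex), then f is interval convex: the restriction of f to any line segment contained in Ω is convex. -/
open scoped BigOperators

private lemma slope_left_of_adj {f : ℝ → ℝ} {x y z : ℝ} (hxy : x < y) (hyz : y < z)
    (h : (f y - f x) / (y - x) ≤ (f z - f y) / (z - y)) :
    (f y - f x) / (y - x) ≤ (f z - f x) / (z - x) := by
  rw [div_le_div_iff₀ (by linarith) (by linarith)] at h ⊢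
  nlinarith

private lemma slope_right_of_adj {f : ℝ → ℝ} {x y z : ℝ} (hxy : x < y) (hyz : y < z)
    (h : (f y - f x) / (y - x) ≤ (f z - f y) / (z - y)) :
    (f z - f x) / (z - x) ≤ (f z - f y) / (z - y) := by
  rw [div_le_div_iff₀ (by linarith) (by linarith)] at h ⊢
  nlinarith

/-- Gluing overlapping intervals of convexity. -/
private lemma glue {g : ℝ → ℝ} {a b c d : ℝ}
    (hab : ConvexOn ℝ (Set.Icc a b) g) (hcd : ConvexOn ℝ (Set.Icc c d) g)
    (hac : a ≤ c) (hcb : c < b) (hbd : b ≤ d) :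
    ConvexOn ℝ (Set.Icc a d) g := by
  rw [convexOn_iff_slope_mono_adjacent]
  refine ⟨convex_Icc a d, fun x y z hx hz hxy hyz => ?_⟩
  obtain ⟨hx1, hx2⟩ := hx
  obtain ⟨hz1, hz2⟩ := hz
  by_cases hzb : z ≤ b
  · exact hab.slope_mono_adjacent ⟨hx1, by linarith⟩ ⟨by linarith, hzb⟩ hxy hyz
  by_cases hcx : c ≤ x
  · exact hcd.slope_mono_adjacent ⟨hcx, by linarith⟩ ⟨by linarith, hz2⟩ hxy hyz
  push_neg at hzb hcx
  -- x < c < b < z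
  by_cases hyb : y < b
  · set m := (max y c + b) / 2 with hm
    have hym : y < m := by
      have : y ≤ max y c := le_max_left _ _
      have : max y c < b := max_lt hyb hcb
      simp only [hm]; linarith [le_max_left y c]
    have hcm : c < m := by
      have : c ≤ max y c := le_max_right _ _
      have : max y c < b := max_lt hyb hcb
      simp only [hm]; linarith [le_max_right y c]
    have hmb : m < b := by
      have : max y c < b := max_lt hyb hcb
      simp only [hm]; linarith
    have h1 : (g y - g x) / (y - x) ≤ (g m - g y) / (m - y) :=
      hab.slope_mono_adjacent (x := x) (y := y) (z := m)
        ⟨hx1, by linarith⟩ ⟨by linarith, hmb.le⟩ hxy hym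
    have h2 : (g m - g y) / (m - y) ≤ (g z - g m) / (z - m) := by
      by_cases hcy : c ≤ y
      · exact hcd.slope_mono_adjacent ⟨hcy, by linarith⟩ ⟨by linarith, hz2⟩ hym (by linarith)
      · push_neg at hcy
        set m' := (m + b) / 2 with hm'
        have hmm' : m < m' := by simp only [hm']; linarith
        have hm'b : m' < b := by simp only [hm']; linarith
        have h3 : (g m - g y) / (m - y) ≤ (g m' - g m) / (m' - m) :=
          hab.slope_mono_adjacent ⟨by linarith, by linarith⟩ ⟨by linarith, hm'b.le⟩ hym hmm'
        have h4 : (g m' - g m) / (m' - m) ≤ (g z - g m') / (z - m') :=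
          hcd.slope_mono_adjacent ⟨hcm.le, by linarith⟩ ⟨by linarith, hz2⟩ hmm' (by linarith)
        have h5 : (g m' - g m) / (m' - m) ≤ (g z - g m) / (z - m) :=
          slope_left_of_adj hmm' (by linarith) h4
        linarith
    -- combine: slope(y,m) ≤ slope(y,z) since slope(y,m) ≤ slope(m,z)
    have h6 : (g m - g y) / (m - y) ≤ (g z - g y) / (z - y) :=
      slope_left_of_adj hym (by linarith) h2
    linarith
  · push_neg at hyb  -- b ≤ y
    set m := (c + b) / 2 with hm
    have hcm : c < m := by simp only [hm]; linarith
    have hmb : m < b := by simp only [hm]; linarith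
    have hmy : m < y := by linarith
    set m' := (m + b) / 2 with hm'
    have hmm' : m < m' := by simp only [hm']; linarith
    have hm'b : m' < b := by simp only [hm']; linarith
    have h3 : (g m - g x) / (m - x) ≤ (g m' - g m) / (m' - m) :=
      hab.slope_mono_adjacent ⟨hx1, by linarith⟩ ⟨by linarith, hm'b.le⟩ (by linarith) hmm'
    have h4 : (g m' - g m) / (m' - m) ≤ (g y - g m') / (y - m') :=
      hcd.slope_mono_adjacent ⟨hcm.le, by linarith⟩ ⟨by linarith, by linarith⟩ hmm' (by linarith)
    have h5 : (g m' - g m) / (m' - m) ≤ (g y - g m) / (y - m) :=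
      slope_left_of_adj hmm' (by linarith) h4
    -- slope(x,m) ≤ slope(m,y) hence slope(x,y) ≤ slope(m,y)
    have h6 : (g y - g x) / (y - x) ≤ (g y - g m) / (y - m) :=
      slope_right_of_adj (by linarith) hmy (by linarith)
    have h7 : (g y - g m) / (y - m) ≤ (g z - g y) / (z - y) :=
      hcd.slope_mono_adjacent ⟨hcm.le, by linarith⟩ ⟨by linarith, hz2⟩ hmy hyz
    linarith

/-- Local convexity on `[0,1]` implies global convexity. -/
private lemma convexOn_of_locally {g : ℝ → ℝ}
    (H : ∀ t ∈ Set.Icc (0:ℝ) 1, ∃ δ > (0:ℝ),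
      ConvexOn ℝ (Set.Icc (t - δ) (t + δ) ∩ Set.Icc 0 1) g) :
    ConvexOn ℝ (Set.Icc (0:ℝ) 1) g := by
  set S : Set ℝ := {t | t ∈ Set.Icc (0:ℝ) 1 ∧ ConvexOn ℝ (Set.Icc 0 t) g} with hS
  have h0 : (0:ℝ) ∈ S := by
    refine ⟨⟨le_refl _, zero_le_one⟩, ?_⟩
    obtain ⟨δ, hδ, hconv⟩ := H 0 ⟨le_refl _, zero_le_one⟩
    refine hconv.subset (fun x hx => ?_) (convex_Icc _ _)
    rw [Set.mem_Icc] at hx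
    have hx0 : x = 0 := le_antisymm hx.2 hx.1
    subst hx0
    exact ⟨⟨by linarith, by linarith⟩, le_refl _, zero_le_one⟩
  have hbdd : BddAbove S := ⟨1, fun t ht => ht.1.2⟩
  set T := sSup S with hT
  have hT0 : 0 ≤ T := le_csSup hbdd h0
  have hT1 : T ≤ 1 := csSup_le ⟨0, h0⟩ (fun t ht => ht.1.2)
  obtain ⟨δ, hδ, hconv⟩ := H T ⟨hT0, hT1⟩
  -- there is s ∈ S with s > T - δ/2
  obtain ⟨s, hsS, hs⟩ : ∃ s ∈ S, T - δ/2 < s := by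
    by_contra hcon
    push_neg at hcon
    have : T ≤ T - δ/2 := csSup_le ⟨0, h0⟩ hcon
    linarith
  have hsT : s ≤ T := le_csSup hbdd hsS
  set b := min (T + δ/2) 1 with hb
  have hbS : b ∈ S := by
    refine ⟨⟨le_min (by linarith) zero_le_one, min_le_right _ _⟩, ?_⟩
    · have hset : Set.Icc (T - δ) (T + δ) ∩ Set.Icc (0:ℝ) 1
          = Set.Icc (max (T - δ) 0) (min (T + δ) 1) := by
        rw [Set.Icc_inter_Icc]
      rw [hset] at hconv
      by_cases hc0 : T - δ ≤ 0
      · refine hconv.subset (fun x hx => ?_) (convex_Icc _ _)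
        obtain ⟨hx1, hx2⟩ := hx
        constructor
        · exact max_le (by linarith) hx1
        · refine le_min (le_trans hx2 ?_) (le_trans hx2 (min_le_right _ _))
          exact le_trans (min_le_left _ _) (by linarith)
      · push_neg at hc0
        have hmax : max (T - δ) 0 = T - δ := max_eq_left hc0.le
        rw [hmax] at hconv
        have hglue : ConvexOn ℝ (Set.Icc 0 (min (T + δ) 1)) g := by
          refine glue hsS.2 hconv (by linarith) (by linarith) ?_
          refine le_min (by linarith) (le_trans hsT hT1)
        refine hglue.subset (fun x hx => ⟨hx.1, le_trans hx.2 ?_⟩) (convex_Icc _ _)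
        exact le_min (le_trans (min_le_left _ _) (by linarith)) (min_le_right _ _)
  have hbT : b ≤ T := le_csSup hbdd hbS
  have hb1 : b = 1 := by
    rcases le_or_gt (T + δ/2) 1 with h | h
    · simp only [hb, min_eq_left h] at hbT; linarith
    · simp only [hb, min_eq_right h.le]
  rw [hb1] at hbS
  exact hbS.2

/-- If a function on a subset `Ω ⊆ ℝⁿ` is locally convex, then it is interval convex:
its restriction to any line segment contained in `Ω` is convex. -/
theorem intervalConvex_of_locallyConvex {n : ℕ}
    (Ω : Set (EuclideanSpace ℝ (Fin n))) (f : EuclideanSpace ℝ (Fin n) → ℝ)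
    (hf : ∀ x ∈ Ω, ∃ ε > (0 : ℝ), JConvexOn (Metric.ball x ε ∩ Ω) f) :
    ∀ x₁ ∈ Ω, ∀ x₂ ∈ Ω, segment ℝ x₁ x₂ ⊆ Ω → ∀ l : ℝ, 0 ≤ l → l ≤ 1 →
      f (l • x₁ + (1 - l) • x₂) ≤ l * f x₁ + (1 - l) * f x₂ := by
  intro x₁ hx₁ x₂ hx₂ hseg l hl0 hl1
  set P : ℝ → EuclideanSpace ℝ (Fin n) := fun t => t • x₁ + (1 - t) • x₂ with hP
  set g : ℝ → ℝ := fun t => f (P t) with hg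
  have hmem : ∀ t ∈ Set.Icc (0:ℝ) 1, P t ∈ Ω := fun t ht =>
    hseg ⟨t, 1 - t, ht.1, by linarith [ht.2], by ring, rfl⟩
  have H : ∀ t ∈ Set.Icc (0:ℝ) 1, ∃ δ > (0:ℝ),
      ConvexOn ℝ (Set.Icc (t - δ) (t + δ) ∩ Set.Icc 0 1) g := by
    intro t₀ ht₀
    obtain ⟨ε, hε, hJ⟩ := hf (P t₀) (hmem t₀ ht₀)
    set δ := ε / (‖x₁ - x₂‖ + 1) with hδdef
    have hnorm : (0:ℝ) ≤ ‖x₁ - x₂‖ := norm_nonneg _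
    have hδ : 0 < δ := by positivity
    have key : ∀ t ∈ Set.Icc (t₀ - δ) (t₀ + δ) ∩ Set.Icc (0:ℝ) 1,
        P t ∈ Metric.ball (P t₀) ε ∩ Ω := by
      intro t ht
      obtain ⟨⟨ht1, ht2⟩, ht3⟩ := ht
      refine ⟨?_, hmem t ht3⟩
      rw [Metric.mem_ball, dist_eq_norm]
      have heq : P t - P t₀ = (t - t₀) • (x₁ - x₂) := by
        simp only [hP]; module
      rw [heq, norm_smul, Real.norm_eq_abs]
      have habs : |t - t₀| ≤ δ := abs_le.mpr ⟨by linarith, by linarith⟩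
      have hδε : δ * (‖x₁ - x₂‖ + 1) = ε := by
        rw [hδdef, div_mul_cancel₀]; positivity
      nlinarith [abs_nonneg (t - t₀)]
    refine ⟨δ, hδ, ⟨(convex_Icc _ _).inter (convex_Icc _ _), ?_⟩⟩
    intro u hu v hv a b ha hb hab
    have hcvx : a • u + b • v ∈ Set.Icc (t₀ - δ) (t₀ + δ) ∩ Set.Icc (0:ℝ) 1 :=
      ((convex_Icc _ _).inter (convex_Icc _ _)) hu hv ha hb hab
    simp only [smul_eq_mul] at hcvx ⊢
    have hcomb : P (a * u + b * v) = a • P u + b • P v := by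
      simp only [hP]
      have h1 : (1 : ℝ) - (a * u + b * v) = a * (1 - u) + b * (1 - v) := by
        linear_combination -hab
      rw [h1]
      module
    have := hJ 2 ![P u, P v] ![a, b]
      (by intro i; fin_cases i <;> simpa using key _ ‹_›)
      (by intro i; fin_cases i <;> simpa)
      (by simp [Fin.sum_univ_two, hab])
      (by
        rw [show (∑ i, (![a, b] i) • (![P u, P v] i)) = a • P u + b • P v by
          simp [Fin.sum_univ_two]]
        rw [← hcomb]; exact key _ hcvx)
    rw [show (∑ i, (![a, b] i) • (![P u, P v] i)) = a • P u + b • P v by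
      simp [Fin.sum_univ_two]] at this
    rw [Fin.sum_univ_two] at this
    simp only [Matrix.cons_val_zero, Matrix.cons_val_one, Matrix.head_cons] at this
    calc g (a * u + b * v) = f (a • P u + b • P v) := by rw [hg]; simp only [← hcomb]
    _ ≤ a * f (P u) + b * f (P v) := this
    _ = a * g u + b * g v := rfl
  have hcg : ConvexOn ℝ (Set.Icc (0:ℝ) 1) g := convexOn_of_locally H
  have := hcg.2 (Set.mem_Icc.mpr ⟨zero_le_one, le_refl 1⟩)
    (Set.mem_Icc.mpr ⟨le_refl 0, zero_le_one⟩)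
    (show (0:ℝ) ≤ l from hl0) (show (0:ℝ) ≤ 1 - l by linarith)
    (show l + (1 - l) = 1 by ring)
  simp only [smul_eq_mul, mul_one, mul_zero, add_zero] at this
  have hg1 : g 1 = f x₁ := by simp [hg, hP]
  have hg0 : g 0 = f x₂ := by simp [hg, hP]
  rw [hg1, hg0] at this
  exact this
end

section
/- Let f be a convex function on a subset Ω ⊆ ℝ^n that is bounded below. Then f extends to a real-valued convex function on the convex hull of Ω; indeed, the convex roof f̂(x) = inf{λ₁f(x₁)+⋯+λₖf(xₖ) : x = λ₁x₁+⋯+λₖxₖ, xᵢ ∈ Ω, λᵢ ≥ 0, Σλᵢ = 1} is finite on the convex hull, convex, and agrees with f on Ω. -/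
open scoped BigOperators

/-- The set of values `∑ λᵢ f(xᵢ)` over all representations of `x` as a convex
combination `x = ∑ λᵢ xᵢ` of points `xᵢ ∈ Ω`. -/
def roofSet {E : Type*} [AddCommGroup E] [Module ℝ E] (Ω : Set E) (f : E → ℝ) (x : E) :
    Set ℝ :=
  { r | ∃ (k : ℕ) (p : Fin k → E) (w : Fin k → ℝ),
      (∀ i, p i ∈ Ω) ∧ (∀ i, 0 ≤ w i) ∧ (∑ i, w i) = 1 ∧
      (∑ i, w i • p i) = x ∧ r = ∑ i, w i * f (p i) }

/-- The convex roof of `f`. -/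
noncomputable def convexRoof {E : Type*} [AddCommGroup E] [Module ℝ E]
    (Ω : Set E) (f : E → ℝ) (x : E) : ℝ :=
  sInf (roofSet Ω f x)

lemma roofSet_nonempty {E : Type*} [AddCommGroup E] [Module ℝ E]
    (Ω : Set E) (f : E → ℝ) {x : E} (hx : x ∈ convexHull ℝ Ω) :
    (roofSet Ω f x).Nonempty := by
  rw [mem_convexHull_iff_exists_fintype] at hx
  obtain ⟨ι, _, w, z, hw0, hw1, hz, hx⟩ := hx
  refine ⟨∑ i, w i * f (z i), Fintype.card ι, z ∘ (Fintype.equivFin ι).symm,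
    w ∘ (Fintype.equivFin ι).symm, fun i => hz _, fun i => hw0 _, ?_, ?_, ?_⟩
  · exact (Equiv.sum_comp (Fintype.equivFin ι).symm w).trans hw1
  · exact (Equiv.sum_comp (Fintype.equivFin ι).symm (fun j => w j • z j)).trans hx
  · exact (Equiv.sum_comp (Fintype.equivFin ι).symm (fun j => w j * f (z j))).symm

lemma roofSet_bddBelow {E : Type*} [AddCommGroup E] [Module ℝ E]
    (Ω : Set E) (f : E → ℝ) {m : ℝ} (hm : ∀ x ∈ Ω, m ≤ f x) (x : E) :
    m ∈ lowerBounds (roofSet Ω f x) := by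
  rintro r ⟨k, p, w, hp, hw0, hw1, -, rfl⟩
  calc m = ∑ i, w i * m := by rw [← Finset.sum_mul, hw1, one_mul]
    _ ≤ ∑ i, w i * f (p i) :=
      Finset.sum_le_sum fun i _ => mul_le_mul_of_nonneg_left (hm _ (hp i)) (hw0 i)

lemma roofSet_combo {E : Type*} [AddCommGroup E] [Module ℝ E]
    (Ω : Set E) (f : E → ℝ) {x y : E} {rx ry a b : ℝ}
    (hrx : rx ∈ roofSet Ω f x) (hry : ry ∈ roofSet Ω f y)
    (ha : 0 ≤ a) (hb : 0 ≤ b) (hab : a + b = 1) :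
    a * rx + b * ry ∈ roofSet Ω f (a • x + b • y) := by
  obtain ⟨k, p, w, hp, hw0, hw1, hps, rfl⟩ := hrx
  obtain ⟨l, q, v, hq, hv0, hv1, hqs, rfl⟩ := hry
  refine ⟨k + l, Fin.append p q, Fin.append (fun i => a * w i) (fun i => b * v i),
    ?_, ?_, ?_, ?_, ?_⟩
  · intro i
    rcases Nat.lt_or_ge i.val k with h | h
    · have : i = Fin.castAdd l ⟨i, h⟩ := by simp [Fin.ext_iff]
      rw [this, Fin.append_left]; exact hp _
    · have : i = Fin.natAdd k ⟨i - k, by omega⟩ := by simp [Fin.ext_iff]; omega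
      rw [this, Fin.append_right]; exact hq _
  · intro i
    rcases Nat.lt_or_ge i.val k with h | h
    · have : i = Fin.castAdd l ⟨i, h⟩ := by simp [Fin.ext_iff]
      rw [this, Fin.append_left]; exact mul_nonneg ha (hw0 _)
    · have : i = Fin.natAdd k ⟨i - k, by omega⟩ := by simp [Fin.ext_iff]; omega
      rw [this, Fin.append_right]; exact mul_nonneg hb (hv0 _)
  · rw [Fin.sum_univ_add]
    simp only [Fin.append_left, Fin.append_right, ← Finset.mul_sum, hw1, hv1]
    simpa using hab
  · rw [Fin.sum_univ_add]
    simp only [Fin.append_left, Fin.append_right, mul_smul, ← Finset.smul_sum, hps, hqs]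
  · rw [Fin.sum_univ_add]
    simp only [Fin.append_left, Fin.append_right, mul_assoc, ← Finset.mul_sum]

/-- A bounded-below convex function on `Ω ⊆ ℝⁿ` extends, via the convex roof, to a
real-valued convex function on the convex hull of `Ω`. -/
theorem convexRoof_extension {n : ℕ}
    (Ω : Set (EuclideanSpace ℝ (Fin n))) (f : EuclideanSpace ℝ (Fin n) → ℝ)
    (hf : JConvexOn Ω f) (hbd : ∃ m : ℝ, ∀ x ∈ Ω, m ≤ f x) :
    (∀ x ∈ convexHull ℝ Ω, (roofSet Ω f x).Nonempty ∧ BddBelow (roofSet Ω f x)) ∧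
    ConvexOn ℝ (convexHull ℝ Ω) (convexRoof Ω f) ∧
    ∀ x ∈ Ω, convexRoof Ω f x = f x := by
  obtain ⟨m, hm⟩ := hbd
  have hbdd : ∀ x, BddBelow (roofSet Ω f x) := fun x => ⟨m, roofSet_bddBelow Ω f hm x⟩
  refine ⟨fun x hx => ⟨roofSet_nonempty Ω f hx, hbdd x⟩, ⟨convex_convexHull ℝ Ω, ?_⟩, ?_⟩
  · intro x hx y hy a b ha hb hab
    have hne_x := roofSet_nonempty Ω f hx
    have hne_y := roofSet_nonempty Ω f hy
    refine le_of_forall_pos_le_add fun ε hε => ?_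
    obtain ⟨rx, hrx, hrx'⟩ := Real.lt_sInf_add_pos hne_x hε
    obtain ⟨ry, hry, hry'⟩ := Real.lt_sInf_add_pos hne_y hε
    have hmem := roofSet_combo Ω f hrx hry ha hb hab
    calc convexRoof Ω f (a • x + b • y) ≤ a * rx + b * ry :=
          csInf_le (hbdd _) hmem
      _ ≤ a * (sInf (roofSet Ω f x) + ε) + b * (sInf (roofSet Ω f y) + ε) := by
          have h1 := mul_le_mul_of_nonneg_left hrx'.le ha
          have h2 := mul_le_mul_of_nonneg_left hry'.le hb
          linarith
      _ = a * convexRoof Ω f x + b * convexRoof Ω f y + ε := by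
          have h1 : a * ε + b * ε = ε := by rw [← add_mul, hab, one_mul]
          simp only [convexRoof]; linear_combination h1
  · intro x hx
    have hle : convexRoof Ω f x ≤ f x := by
      apply csInf_le (hbdd x)
      refine ⟨1, fun _ => x, fun _ => 1, fun _ => hx, fun _ => zero_le_one, by simp, by simp,
        by simp⟩
    have hge : f x ≤ convexRoof Ω f x := by
      apply le_csInf (roofSet_nonempty Ω f (subset_convexHull ℝ Ω hx))
      rintro r ⟨k, p, w, hp, hw0, hw1, hps, rfl⟩
      have := hf k p w hp hw0 hw1 (hps ▸ hx)
      rwa [hps] at this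
    linarith
end

section
/- A convex function on a bounded convex subset Ω ⊆ ℝ^n can be extended to a real-valued convex function on all of ℝ^n if and only if it is Lipschitz on Ω. -/
open Metric Set Bornology


/-- A convex function on a bounded convex subset `Ω ⊆ ℝⁿ` can be extended to a
real-valued convex function on all of `ℝⁿ` if and only if it is Lipschitz on `Ω`. -/
theorem convex_extension_iff_lipschitz {n : ℕ}
    (Ω : Set (EuclideanSpace ℝ (Fin n))) (hb : Bornology.IsBounded Ω)
    (hΩ : Convex ℝ Ω) (f : EuclideanSpace ℝ (Fin n) → ℝ) (hf : ConvexOn ℝ Ω f) :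
    (∃ g : EuclideanSpace ℝ (Fin n) → ℝ,
        ConvexOn ℝ Set.univ g ∧ Set.EqOn g f Ω) ↔
      ∃ l : ℝ, ∀ x ∈ Ω, ∀ y ∈ Ω, |f x - f y| ≤ l * ‖x - y‖ := by
  constructor
  · rintro ⟨g, hg, hgf⟩
    obtain ⟨r, hr⟩ := (isBounded_iff_subset_ball (0 : EuclideanSpace ℝ (Fin n))).1 hb
    -- g is continuous on ℝⁿ
    have hcont : Continuous g := by
      have := hg.continuousOn isOpen_univ
      rwa [continuousOn_univ] at this
    have hbd : IsBounded (g '' ball (0 : EuclideanSpace ℝ (Fin n)) (r + 1)) := by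
      have : IsCompact (g '' closedBall (0 : EuclideanSpace ℝ (Fin n)) (r + 1)) :=
        (isCompact_closedBall _ _).image hcont
      exact this.isBounded.subset (Set.image_mono ball_subset_closedBall)
    have hsub : ConvexOn ℝ (ball (0 : EuclideanSpace ℝ (Fin n)) (r + 1)) g :=
      hg.subset (Set.subset_univ _) (convex_ball _ _)
    obtain ⟨K, hK⟩ := hsub.exists_lipschitzOnWith_of_isBounded (lt_add_one r) hbd
    refine ⟨K, fun x hx y hy => ?_⟩
    rw [← hgf hx, ← hgf hy]
    have := hK.dist_le_mul x (hr hx) y (hr hy)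
    rwa [Real.dist_eq, dist_eq_norm] at this
  · rintro ⟨l, hl⟩
    rcases Set.eq_empty_or_nonempty Ω with rfl | ⟨a, ha⟩
    · exact ⟨0, convexOn_const 0 convex_univ, by simp [Set.EqOn]⟩
    set l' := max l 0 with hl'def
    have hl'0 : 0 ≤ l' := le_max_right _ _
    have hll' : ∀ x ∈ Ω, ∀ y ∈ Ω, |f x - f y| ≤ l' * ‖x - y‖ := fun x hx y hy =>
      (hl x hx y hy).trans (by
        have : (0:ℝ) ≤ ‖x - y‖ := norm_nonneg _
        nlinarith [le_max_left l 0])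
    set S : EuclideanSpace ℝ (Fin n) → Set ℝ :=
      fun x => (fun y => f y + l' * ‖x - y‖) '' Ω with hS
    have hSne : ∀ x, (S x).Nonempty := fun x => ⟨_, a, ha, rfl⟩
    have hSbdd : ∀ x, f a - l' * ‖x - a‖ ∈ lowerBounds (S x) := by
      rintro x _ ⟨y, hy, rfl⟩
      have h1 : |f a - f y| ≤ l' * ‖a - y‖ := hll' a ha y hy
      have h2 : ‖a - y‖ ≤ ‖x - y‖ + ‖x - a‖ := by
        calc ‖a - y‖ = ‖(x - y) - (x - a)‖ := by rw [show (x - y) - (x - a) = a - y by abel]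
        _ ≤ ‖x - y‖ + ‖x - a‖ := norm_sub_le _ _
      have h3 : f a - f y ≤ l' * ‖a - y‖ := (le_abs_self _).trans h1
      show f a - l' * ‖x - a‖ ≤ f y + l' * ‖x - y‖
      nlinarith
    set g : EuclideanSpace ℝ (Fin n) → ℝ := fun x => sInf (S x) with hg
    refine ⟨g, ⟨convex_univ, ?_⟩, ?_⟩
    · rintro x - y - p q hp hq hpq
      rw [← sub_nonneg]
      by_contra hcon
      push_neg at hcon
      rw [sub_neg] at hcon
      set ε := (g (p • x + q • y) - (p * g x + q * g y))
      have hε : 0 < ε := by simpa [ε, sub_pos] using hcon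
      have hε2 : 0 < ε / 2 := by positivity
      obtain ⟨_, ⟨y₁, hy₁, rfl⟩, h1⟩ := Real.lt_sInf_add_pos (hSne x) hε2
      obtain ⟨_, ⟨y₂, hy₂, rfl⟩, h2⟩ := Real.lt_sInf_add_pos (hSne y) hε2
      have h1' : f y₁ + l' * ‖x - y₁‖ < g x + ε / 2 := h1
      have h2' : f y₂ + l' * ‖y - y₂‖ < g y + ε / 2 := h2
      have hmem : p • y₁ + q • y₂ ∈ Ω := hΩ hy₁ hy₂ hp hq hpq
      have hle : g (p • x + q • y) ≤
          f (p • y₁ + q • y₂) + l' * ‖(p • x + q • y) - (p • y₁ + q • y₂)‖ :=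
        csInf_le ⟨_, hSbdd _⟩ ⟨_, hmem, rfl⟩
      have hfc : f (p • y₁ + q • y₂) ≤ p * f y₁ + q * f y₂ := hf.2 hy₁ hy₂ hp hq hpq
      have hnorm : ‖(p • x + q • y) - (p • y₁ + q • y₂)‖ ≤ p * ‖x - y₁‖ + q * ‖y - y₂‖ := by
        have : (p • x + q • y) - (p • y₁ + q • y₂) = p • (x - y₁) + q • (y - y₂) := by
          module
        rw [this]
        calc ‖p • (x - y₁) + q • (y - y₂)‖ ≤ ‖p • (x - y₁)‖ + ‖q • (y - y₂)‖ := norm_add_le _ _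
        _ = p * ‖x - y₁‖ + q * ‖y - y₂‖ := by
            rw [norm_smul, norm_smul, Real.norm_eq_abs, Real.norm_eq_abs,
              abs_of_nonneg hp, abs_of_nonneg hq]
      have hx1 : p * (f y₁ + l' * ‖x - y₁‖) ≤ p * (g x + ε / 2) :=
        mul_le_mul_of_nonneg_left h1'.le hp
      have hy2 : q * (f y₂ + l' * ‖y - y₂‖) ≤ q * (g y + ε / 2) :=
        mul_le_mul_of_nonneg_left h2'.le hq
      have hfin : g (p • x + q • y) ≤ p * g x + q * g y + ε / 2 := by nlinarith
      have : ε = g (p • x + q • y) - (p * g x + q * g y) := rfl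
      linarith
    · intro x hx
      apply le_antisymm
      · have : g x ≤ f x + l' * ‖x - x‖ := csInf_le ⟨_, hSbdd _⟩ ⟨x, hx, rfl⟩
        simpa using this
      · apply le_csInf (hSne x)
        rintro _ ⟨y, hy, rfl⟩
        show f x ≤ f y + l' * ‖x - y‖
        have h := hll' x hx y hy
        have := (le_abs_self (f x - f y)).trans h
        linarith
end

section
/- Let Ω ⊆ ℝ^n be a bounded convex set, A a subset with closure contained in the relative interior of Ω, and f : Ω∖A → ℝ a convex function that is Lipschitz with constant l. Then any convex extension f̂ of f to Ω (obtained via the convex roof) is also Lipschitz with the same constant l on Ω. -/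
open scoped BigOperators

/-- If `Ω ⊆ ℝⁿ` is bounded and convex, `closure A ⊆ relint Ω`, and `f` is convex and
`l`-Lipschitz on `Ω \ A`, then any real-valued convex extension `f̂` of `f` to `Ω`
is `l`-Lipschitz on `Ω`. -/
theorem convex_extension_lipschitz {n : ℕ}
    (Ω A : Set (EuclideanSpace ℝ (Fin n))) (hb : Bornology.IsBounded Ω)
    (hΩ : Convex ℝ Ω) (hA : closure A ⊆ intrinsicInterior ℝ Ω)
    (f : EuclideanSpace ℝ (Fin n) → ℝ) (hf : JConvexOn (Ω \ A) f)
    (l : ℝ) (hlip : ∀ x ∈ Ω \ A, ∀ y ∈ Ω \ A, |f x - f y| ≤ l * ‖x - y‖)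
    (g : EuclideanSpace ℝ (Fin n) → ℝ)
    (hg : ConvexOn ℝ Ω g) (hgf : Set.EqOn g f (Ω \ A)) :
    ∀ x ∈ Ω, ∀ y ∈ Ω, |g x - g y| ≤ l * ‖x - y‖ := by
  suffices key : ∀ x ∈ Ω, ∀ y ∈ Ω, g x - g y ≤ l * ‖x - y‖ by
    intro x hx y hy
    rw [abs_sub_le_iff]
    refine ⟨key x hx y hy, ?_⟩
    have := key y hy x hx
    rwa [norm_sub_rev] at this
  intro x hx y hy
  rcases eq_or_ne x y with rfl | hxy
  · simp
  set L : ℝ := ‖x - y‖ with hLdef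
  have hL : 0 < L := by
    simpa [hLdef] using sub_ne_zero.mpr hxy
  have hdistL : dist y x = L := by
    rw [dist_comm, dist_eq_norm]
  -- the affine parametrization of the line through y and x
  set p : ℝ →ᵃ[ℝ] EuclideanSpace ℝ (Fin n) := AffineMap.lineMap y x with hp
  have hp0 : p 0 = y := AffineMap.lineMap_apply_zero y x
  have hp1 : p 1 = x := AffineMap.lineMap_apply_one y x
  have hpdist : ∀ s t : ℝ, dist (p s) (p t) = |s - t| * L := by
    intro s t
    rw [hp, dist_lineMap_lineMap, hdistL, Real.dist_eq]
  set S : Set ℝ := p ⁻¹' Ω with hS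
  have hSconv : Convex ℝ S := hΩ.affine_preimage p
  have h0S : (0 : ℝ) ∈ S := by simp [hS, hp0, hy]
  have h1S : (1 : ℝ) ∈ S := by simp [hS, hp1, hx]
  have hSne : S.Nonempty := ⟨0, h0S⟩
  -- S is bounded above
  obtain ⟨r, hr⟩ := hb.subset_ball y
  have hbdd : BddAbove S := by
    refine ⟨r / L, ?_⟩
    intro t ht
    have h1 : dist (p t) y < r := hr ht
    have h2 : dist (p t) (p 0) = |t| * L := by simpa using hpdist t 0
    rw [hp0] at h2
    have h3 : |t| * L < r := h2 ▸ h1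
    have : t ≤ |t| := le_abs_self t
    have h4 : |t| ≤ r / L := (le_div_iff₀ hL).mpr h3.le
    linarith
  set T : ℝ := sSup S with hT
  have hT1 : (1 : ℝ) ≤ T := le_csSup hbdd h1S
  -- points strictly below T and ≥ 0 are in S
  have hmemS : ∀ t : ℝ, 0 ≤ t → t < T → t ∈ S := by
    intro t ht0 htT
    obtain ⟨s, hsS, hts⟩ := exists_lt_of_lt_csSup hSne htT
    exact hSconv.ordConnected.out h0S hsS ⟨ht0, hts.le⟩
  -- p t lies in the affine span of Ω for all t
  have hspan : ∀ t : ℝ, p t ∈ affineSpan ℝ Ω := by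
    intro t
    exact AffineMap.lineMap_mem t (subset_affineSpan ℝ Ω hy) (subset_affineSpan ℝ Ω hx)
  -- near the supremum, the points avoid A
  have hδ : ∃ δ > 0, ∀ t : ℝ, T - δ < t → t ≤ T → p t ∉ A := by
    by_contra hcon
    push_neg at hcon
    have hclos : p T ∈ closure A := by
      rw [Metric.mem_closure_iff]
      intro ε hε
      obtain ⟨t, ht1, ht2, ht3⟩ := hcon (ε / L) (div_pos hε hL)
      refine ⟨p t, ht3, ?_⟩
      rw [hpdist T t]
      have h5 : |T - t| = T - t := abs_of_nonneg (by linarith)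
      rw [h5]
      calc (T - t) * L < ε / L * L := by
            apply mul_lt_mul_of_pos_right _ hL
            linarith
        _ = ε := by field_simp
    have hint := hA hclos
    rw [mem_intrinsicInterior] at hint
    obtain ⟨q, hq_int, hq_eq⟩ := hint
    obtain ⟨ε, hε, hball⟩ := Metric.isOpen_iff.mp isOpen_interior q hq_int
    have hball' : ∀ z : EuclideanSpace ℝ (Fin n), z ∈ affineSpan ℝ Ω →
        dist z (p T) < ε → z ∈ Ω := by
      intro z hz hdz
      have : (⟨z, hz⟩ : affineSpan ℝ Ω) ∈ Metric.ball q ε := by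
        rw [Metric.mem_ball, Subtype.dist_eq, hq_eq]
        exact hdz
      have h7 : (⟨z, hz⟩ : affineSpan ℝ Ω) ∈ Subtype.val ⁻¹' Ω := interior_subset (hball this)
      exact h7
    set t' : ℝ := T + ε / (2 * L) with ht'
    have hpos2 : 0 < ε / (2 * L) := div_pos hε (by linarith)
    have ht'T : T < t' := by rw [ht']; linarith
    have hpt' : p t' ∈ Ω := by
      apply hball' _ (hspan t')
      rw [hpdist t' T]
      have h6 : |t' - T| = ε / (2 * L) := by
        rw [ht']
        simp
        positivity
      rw [h6]
      calc ε / (2 * L) * L = ε / 2 := by field_simp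
        _ < ε := by linarith
    exact absurd (le_csSup hbdd hpt') (not_le.mpr ht'T)
  obtain ⟨δ, hδpos, hδA⟩ := hδ
  -- convexity of g along the line
  have hφ : ConvexOn ℝ S (g ∘ p) := hg.comp_affineMap p
  rcases hT1.lt_or_eq with h1T | h1T
  · -- case 1 < T : pick two points beyond x, close to the supremum
    have hmax : max 1 (T - δ) < T := max_lt h1T (by linarith)
    obtain ⟨t₁, ht₁l, ht₁T⟩ := exists_between hmax
    obtain ⟨t₂, ht₁₂, ht₂T⟩ := exists_between ht₁T
    have h1t₁ : (1 : ℝ) < t₁ := lt_of_le_of_lt (le_max_left _ _) ht₁l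
    have hTδt₁ : T - δ < t₁ := lt_of_le_of_lt (le_max_right _ _) ht₁l
    have ht₁S : t₁ ∈ S := hmemS t₁ (by linarith) ht₁T
    have ht₂S : t₂ ∈ S := hmemS t₂ (by linarith) ht₂T
    have ht₁A : p t₁ ∉ A := hδA t₁ hTδt₁ ht₁T.le
    have ht₂A : p t₂ ∉ A := hδA t₂ (by linarith) ht₂T.le
    have ht₁ΩA : p t₁ ∈ Ω \ A := ⟨ht₁S, ht₁A⟩
    have ht₂ΩA : p t₂ ∈ Ω \ A := ⟨ht₂S, ht₂A⟩
    have hs1 : ((g ∘ p) 1 - (g ∘ p) 0) / (1 - 0) ≤ ((g ∘ p) t₁ - (g ∘ p) 1) / (t₁ - 1) :=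
      hφ.slope_mono_adjacent h0S ht₁S one_pos h1t₁
    have hs2 : ((g ∘ p) t₁ - (g ∘ p) 1) / (t₁ - 1) ≤ ((g ∘ p) t₂ - (g ∘ p) t₁) / (t₂ - t₁) :=
      hφ.slope_mono_adjacent h1S ht₂S h1t₁ ht₁₂
    have hend : ((g ∘ p) t₂ - (g ∘ p) t₁) / (t₂ - t₁) ≤ l * L := by
      rw [div_le_iff₀ (by linarith)]
      have he1 : (g ∘ p) t₁ = f (p t₁) := hgf ht₁ΩA
      have he2 : (g ∘ p) t₂ = f (p t₂) := hgf ht₂ΩA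
      rw [he1, he2]
      have := hlip (p t₂) ht₂ΩA (p t₁) ht₁ΩA
      have hnorm : ‖p t₂ - p t₁‖ = (t₂ - t₁) * L := by
        rw [← dist_eq_norm, hpdist t₂ t₁, abs_of_nonneg (by linarith : (0:ℝ) ≤ t₂ - t₁)]
      rw [hnorm] at this
      calc f (p t₂) - f (p t₁) ≤ |f (p t₂) - f (p t₁)| := le_abs_self _
        _ ≤ l * ((t₂ - t₁) * L) := this
        _ = l * L * (t₂ - t₁) := by ring
    have hfinal : ((g ∘ p) 1 - (g ∘ p) 0) / (1 - 0) ≤ l * L :=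
      le_trans (le_trans hs1 hs2) hend
    simpa [hp1, hp0] using hfinal
  · -- case T = 1 : x is an endpoint of the line inside Ω; then x ∉ A
    have hx_notA : x ∉ A := by
      have := hδA 1 (by rw [← h1T]; linarith) (le_of_eq h1T)
      rwa [hp1] at this
    have hxΩA : x ∈ Ω \ A := ⟨hx, hx_notA⟩
    have hmax : max 0 (1 - δ) < 1 := max_lt one_pos (by linarith)
    obtain ⟨t₁, ht₁l, ht₁1⟩ := exists_between hmax
    have ht₁0 : (0 : ℝ) < t₁ := lt_of_le_of_lt (le_max_left _ _) ht₁l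
    have ht₁δ : 1 - δ < t₁ := lt_of_le_of_lt (le_max_right _ _) ht₁l
    have ht₁S : t₁ ∈ S := hmemS t₁ ht₁0.le (by rw [← h1T]; exact ht₁1)
    have ht₁A : p t₁ ∉ A := hδA t₁ (by rw [← h1T]; linarith) (by rw [← h1T]; linarith)
    have ht₁ΩA : p t₁ ∈ Ω \ A := ⟨ht₁S, ht₁A⟩
    have hs1 : ((g ∘ p) 1 - (g ∘ p) 0) / (1 - 0) ≤ ((g ∘ p) 1 - (g ∘ p) t₁) / (1 - t₁) :=
      hφ.secant_mono_aux3 h0S h1S ht₁0 ht₁1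
    have hend : ((g ∘ p) 1 - (g ∘ p) t₁) / (1 - t₁) ≤ l * L := by
      rw [div_le_iff₀ (by linarith)]
      have he1 : (g ∘ p) t₁ = f (p t₁) := hgf ht₁ΩA
      have he2 : (g ∘ p) 1 = f x := by
        have : (g ∘ p) 1 = g x := by simp [hp1]
        rw [this]; exact hgf hxΩA
      rw [he1, he2]
      have := hlip x hxΩA (p t₁) ht₁ΩA
      have hnorm : ‖x - p t₁‖ = (1 - t₁) * L := by
        rw [← hp1, ← dist_eq_norm, hpdist 1 t₁, abs_of_nonneg (by linarith : (0:ℝ) ≤ 1 - t₁)]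
      rw [hnorm] at this
      calc f x - f (p t₁) ≤ |f x - f (p t₁)| := le_abs_self _
        _ ≤ l * ((1 - t₁) * L) := this
        _ = l * L * (1 - t₁) := by ring
    have hfinal : ((g ∘ p) 1 - (g ∘ p) 0) / (1 - 0) ≤ l * L :=
      le_trans hs1 hend
    simpa [hp1, hp0] using hfinal
end

section
/- Let Ω ⊆ ℝ^n be a bounded convex set and A a subset with closure contained in the relative interior of Ω. Then a convex function on Ω∖A can be extended to a real-valued convex function on all of ℝ^n if and only if it is Lipschitz on Ω∖A. -/
open scoped BigOperators

open Set

variable {E : Type*} [NormedAddCommGroup E] [NormedSpace ℝ E]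

/-- From a point of the intrinsic interior one can move a little in any direction of the
affine span and stay in the set. -/
lemma push_lemma (s : Set E) (p : E) (hp : p ∈ intrinsicInterior ℝ s) (v : E)
    (hv : v ∈ (affineSpan ℝ s).direction) :
    ∃ ε > (0:ℝ), ∀ t : ℝ, |t| < ε → p + t • v ∈ s := by
  obtain ⟨p', hp', rfl⟩ := hp
  have hc : Continuous (fun t : ℝ => (⟨t • v +ᵥ (p':E), AffineSubspace.vadd_mem_of_mem_direction (Submodule.smul_mem _ t hv) p'.2⟩ : affineSpan ℝ s)) := by
    apply continuous_induced_rng.2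
    continuity
  have h0 : (fun t : ℝ => (⟨t • v +ᵥ (p':E), AffineSubspace.vadd_mem_of_mem_direction (Submodule.smul_mem _ t hv) p'.2⟩ : affineSpan ℝ s)) 0 ∈ interior ((↑) ⁻¹' s : Set (affineSpan ℝ s)) := by
    simpa using hp'
  have := (isOpen_interior.preimage hc).mem_nhds h0
  rw [Metric.mem_nhds_iff] at this
  obtain ⟨ε, hε, hball⟩ := this
  refine ⟨ε, hε, fun t ht => ?_⟩
  have : t ∈ Metric.ball (0:ℝ) ε := by simpa [Real.dist_eq] using ht
  have ht2 := hball this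
  have := interior_subset ht2
  simpa [add_comm] using this

/-- Exit point lemma: from `x` in the intrinsic interior, moving away from `y` along the
ray through `x`, one can reach a point of `Ω` avoiding a closed set `K` contained in the
intrinsic interior. -/
lemma exit_lemma (Ω : Set E) (hb : Bornology.IsBounded Ω) (K : Set E) (hK : IsClosed K)
    (hKi : K ⊆ intrinsicInterior ℝ Ω) (x y : E) (hx : x ∈ intrinsicInterior ℝ Ω)
    (hy : y ∈ Ω) (hxy : x ≠ y) :
    ∃ t > (0:ℝ), x + t • (x - y) ∈ Ω \ K := by
  set v := x - y with hv_def
  have hvne : v ≠ 0 := sub_ne_zero.2 hxy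
  have hvnorm : (0:ℝ) < ‖v‖ := norm_pos_iff.2 hvne
  have hxΩ : x ∈ Ω := intrinsicInterior_subset hx
  have hv : v ∈ (affineSpan ℝ Ω).direction :=
    AffineSubspace.vsub_mem_direction (subset_affineSpan ℝ Ω hxΩ) (subset_affineSpan ℝ Ω hy)
  set T : Set ℝ := {t : ℝ | 0 ≤ t ∧ x + t • v ∈ Ω} with hT_def
  obtain ⟨ε, hε, hεmem⟩ := push_lemma Ω x hx v hv
  have hT0 : ε/2 ∈ T := by
    refine ⟨by positivity, hεmem _ ?_⟩
    rw [abs_of_pos (by positivity)]; linarith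
  have hTne : T.Nonempty := ⟨_, hT0⟩
  obtain ⟨C, hC⟩ := (Metric.isBounded_iff.1 hb)
  have hTbdd : BddAbove T := by
    refine ⟨C / ‖v‖, fun t ht => ?_⟩
    have h1 : dist (x + t • v) x ≤ C := hC ht.2 hxΩ
    have h2 : dist (x + t • v) x = t * ‖v‖ := by
      rw [dist_eq_norm]
      simp [norm_smul, abs_of_nonneg ht.1]
    rw [h2] at h1
    rw [le_div_iff₀ hvnorm]; exact h1
  set t₀ : ℝ := sSup T with ht₀_def
  have ht₀pos : 0 < t₀ := lt_of_lt_of_le (by positivity) (le_csSup hTbdd hT0)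
  have hp_not : x + t₀ • v ∉ intrinsicInterior ℝ Ω := by
    intro hmem
    obtain ⟨ε', hε', hε'mem⟩ := push_lemma Ω (x + t₀ • v) hmem v hv
    have : t₀ + ε'/2 ∈ T := by
      constructor
      · positivity
      · have := hε'mem (ε'/2) (by rw [abs_of_pos (by positivity)]; linarith)
        have heq : x + t₀ • v + (ε'/2) • v = x + (t₀ + ε'/2) • v := by
          rw [add_smul]; abel
        rwa [heq] at this
    have := le_csSup hTbdd this
    linarith
  have hpK : x + t₀ • v ∉ K := fun h => hp_not (hKi h)
  rcases K.eq_empty_or_nonempty with hKe | hKne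
  · exact ⟨ε/2, by positivity, hT0.2, by simp [hKe]⟩
  · have hd : 0 < Metric.infDist (x + t₀ • v) K := by
      rwa [← hK.notMem_iff_infDist_pos hKne]
    set d := Metric.infDist (x + t₀ • v) K with hd_def
    set δ : ℝ := min (t₀/2) (d / (2 * ‖v‖)) with hδ_def
    have hδpos : 0 < δ := lt_min (by positivity) (by positivity)
    obtain ⟨t, htT, htgt⟩ := exists_lt_of_lt_csSup hTne (show t₀ - δ < t₀ by linarith)
    have htle : t ≤ t₀ := le_csSup hTbdd htT
    refine ⟨t, ?_, htT.2, ?_⟩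
    · have : δ ≤ t₀/2 := min_le_left _ _
      linarith
    · intro hmemK
      have hdist : dist (x + t₀ • v) (x + t • v) = (t₀ - t) * ‖v‖ := by
        rw [dist_eq_norm]
        have : x + t₀ • v - (x + t • v) = (t₀ - t) • v := by
          rw [sub_smul]; abel
        rw [this, norm_smul, Real.norm_eq_abs, abs_of_nonneg (by linarith)]
      have h1 : d ≤ dist (x + t₀ • v) (x + t • v) := Metric.infDist_le_dist_of_mem hmemK
      have h2 : (t₀ - t) * ‖v‖ ≤ δ * ‖v‖ := by
        apply mul_le_mul_of_nonneg_right (by linarith) (le_of_lt hvnorm)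
      have h3 : δ * ‖v‖ ≤ (d / (2 * ‖v‖)) * ‖v‖ :=
        mul_le_mul_of_nonneg_right (min_le_right _ _) (le_of_lt hvnorm)
      have h4 : (d / (2 * ‖v‖)) * ‖v‖ = d / 2 := by
        field_simp
      rw [hdist] at h1
      rw [h4] at h3
      linarith

/-- Uniform separation: points of `Ω` outside the intrinsic interior stay uniformly away
from a compact subset `K` of the intrinsic interior. -/
lemma sep_lemma [FiniteDimensional ℝ E] (Ω : Set E) (K : Set E) (hK : IsCompact K)
    (hKi : K ⊆ intrinsicInterior ℝ Ω) :
    ∃ δ > (0:ℝ), ∀ x ∈ Ω, x ∉ intrinsicInterior ℝ Ω → ∀ z ∈ K, δ ≤ dist x z := by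
  set C : Set E := ((affineSpan ℝ Ω : Set E)) \ intrinsicInterior ℝ Ω with hC_def
  have hCclosed : IsClosed C := by
    have hspan : IsClosed ((affineSpan ℝ Ω : Set E)) := (affineSpan ℝ Ω).closed_of_finiteDimensional
    have : C = Subtype.val '' ((interior ((↑) ⁻¹' Ω : Set (affineSpan ℝ Ω)))ᶜ) := by
      ext p
      constructor
      · rintro ⟨hp1, hp2⟩
        exact ⟨⟨p, hp1⟩, fun hmem => hp2 ⟨⟨p, hp1⟩, hmem, rfl⟩, rfl⟩
      · rintro ⟨⟨p, hp1⟩, hp2, rfl⟩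
        refine ⟨hp1, fun hmem => hp2 ?_⟩
        obtain ⟨q, hq, hq2⟩ := hmem
        have : q = ⟨p, hp1⟩ := Subtype.ext hq2
        rwa [this] at hq
    rw [this]
    exact (hspan.isClosedEmbedding_subtypeVal.isClosedMap) _ isOpen_interior.isClosed_compl
  have hdisj : Disjoint K C := by
    rw [Set.disjoint_right]
    rintro p ⟨_, hp2⟩ hpK
    exact hp2 (hKi hpK)
  obtain ⟨r, hr, hrlt⟩ := EMetric.exists_pos_forall_lt_edist hK hCclosed hdisj
  refine ⟨r, hr, fun x hx hx2 z hz => ?_⟩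
  have hxC : x ∈ C := ⟨subset_affineSpan ℝ Ω hx, hx2⟩
  have := hrlt z hz x hxC
  have h2 : (r:ℝ) ≤ dist z x := by
    rw [edist_dist] at this
    have := this.le
    rwa [← ENNReal.ofReal_coe_nnreal, ENNReal.ofReal_le_ofReal_iff dist_nonneg] at this
  rwa [dist_comm]

/-- Key lower bound: the value at `x` is controlled by any convex combination. -/
lemma key_lemma [FiniteDimensional ℝ E] (Ω A : Set E) (hΩ : Convex ℝ Ω)
    (hA : closure A ⊆ intrinsicInterior ℝ Ω) (hbA : Bornology.IsBounded Ω)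
    (f : E → ℝ) (hf : JConvexOn (Ω \ A) f) (l : ℝ) (hl0 : 0 ≤ l)
    (hlip : ∀ x ∈ Ω \ A, ∀ y ∈ Ω \ A, |f x - f y| ≤ l * ‖x - y‖)
    (D : ℝ) (hD : ∀ a ∈ Ω, ∀ b ∈ Ω, dist a b ≤ D)
    (δ : ℝ) (hδ : 0 < δ)
    (hsep : ∀ x ∈ Ω, x ∉ intrinsicInterior ℝ Ω → ∀ z ∈ closure A, δ ≤ dist x z) :
    ∀ x ∈ Ω \ A, ∀ (k : ℕ) (xi : Fin k → E) (w : Fin k → ℝ),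
      (∀ i, xi i ∈ Ω \ A) → (∀ i, 0 ≤ w i) → (∑ i, w i) = 1 →
      f x ≤ (∑ i, w i * f (xi i)) + max l (l * D / δ) * ‖x - ∑ i, w i • xi i‖ := by
  intro x hx k xi w hxi hw hw1
  set L : ℝ := max l (l * D / δ) with hL_def
  have hlL : l ≤ L := le_max_left _ _
  set y : E := ∑ i, w i • xi i with hy_def
  have hyΩ : y ∈ Ω := hΩ.sum_mem (fun i _ => hw i) hw1 (fun i _ => (hxi i).1)
  have hnorm : (0:ℝ) ≤ ‖x - y‖ := norm_nonneg _
  by_cases hyA : y ∈ A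
  · -- y lands in A
    by_cases hxint : x ∈ intrinsicInterior ℝ Ω
    · -- x in the intrinsic interior : use the exit point
      have hxyne : x ≠ y := fun h => hx.2 (h ▸ hyA)
      obtain ⟨t, ht, hq⟩ := exit_lemma Ω hbA (closure A) isClosed_closure hA x y hxint hyΩ hxyne
      set q : E := x + t • (x - y) with hq_def
      have hqmem : q ∈ Ω \ A := ⟨hq.1, fun h => hq.2 (subset_closure h)⟩
      set α : ℝ := 1 / (1 + t) with hα_def
      have h1t : (0:ℝ) < 1 + t := by linarith
      have hα_pos : 0 < α := by positivity
      have hα_lt : α < 1 := by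
        rw [hα_def, div_lt_one h1t]; linarith
      have h1α : 1 - α = t / (1 + t) := by
        rw [hα_def]; field_simp; ring
      -- apply Jensen with k+1 points
      set w' : Fin (k+1) → ℝ := Fin.cons α (fun i => (1 - α) * w i) with hw'_def
      set x' : Fin (k+1) → E := Fin.cons q xi with hx'_def
      have hx'mem : ∀ i, x' i ∈ Ω \ A := by
        intro i
        refine Fin.cases ?_ ?_ i <;> simp [hx'_def, hqmem, hxi]
      have hw'pos : ∀ i, 0 ≤ w' i := by
        intro i
        refine Fin.cases ?_ (fun j => ?_) i
        · simp [hw'_def, hα_pos.le]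
        · simp only [hw'_def, Fin.cons_succ]
          exact mul_nonneg (by linarith) (hw j)
      have hw'sum : (∑ i, w' i) = 1 := by
        rw [Fin.sum_univ_succ]
        simp only [hw'_def, Fin.cons_zero, Fin.cons_succ]
        rw [← Finset.mul_sum, hw1]
        field_simp; ring
      have hcomb : (∑ i, w' i • x' i) = x := by
        rw [Fin.sum_univ_succ]
        simp only [hw'_def, hx'_def, Fin.cons_zero, Fin.cons_succ]
        have : (∑ i : Fin k, ((1 - α) * w i) • xi i) = (1 - α) • y := by
          rw [hy_def, Finset.smul_sum]
          exact Finset.sum_congr rfl fun i _ => by rw [mul_smul]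
        have hαt : α * t = 1 - α := by
          rw [hα_def]; field_simp; ring
        rw [this, hq_def, smul_add, smul_smul, hαt]
        module
      have hjen := hf (k+1) x' w' hx'mem hw'pos hw'sum (hcomb ▸ hx)
      rw [hcomb] at hjen
      have hsum' : (∑ i, w' i * f (x' i)) = α * f q + (1 - α) * ∑ i, w i * f (xi i) := by
        rw [Fin.sum_univ_succ]
        simp only [hw'_def, hx'_def, Fin.cons_zero, Fin.cons_succ]
        rw [Finset.mul_sum]
        congr 1
        exact Finset.sum_congr rfl fun i _ => by ring
      rw [hsum'] at hjen
      -- Lipschitz bound on f q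
      have hfq : f q ≤ f x + l * (t * ‖x - y‖) := by
        have := hlip q hqmem x hx
        have h2 : ‖q - x‖ = t * ‖x - y‖ := by
          rw [hq_def]
          simp only [add_sub_cancel_left]
          rw [norm_smul, Real.norm_eq_abs, abs_of_pos ht]
        have h3 := (abs_le.1 this).1
        have h4 := (abs_le.1 this).2
        rw [h2] at h4
        linarith
      -- combine
      have hstep : (1 - α) * f x ≤ α * l * (t * ‖x - y‖) + (1 - α) * ∑ i, w i * f (xi i) := by
        nlinarith [hα_pos, hα_lt]
      have hαt : α * t = 1 - α := by
        rw [h1α, hα_def]; field_simp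
      have h1αpos : 0 < 1 - α := by linarith
      have hfinal : f x ≤ ∑ i, w i * f (xi i) + l * ‖x - y‖ := by
        have : (1 - α) * f x ≤ (1 - α) * (l * ‖x - y‖) + (1 - α) * ∑ i, w i * f (xi i) := by
          have : α * l * (t * ‖x - y‖) = (α * t) * (l * ‖x - y‖) := by ring
          rw [this, hαt] at hstep
          linarith
        nlinarith
      have : l * ‖x - y‖ ≤ L * ‖x - y‖ := mul_le_mul_of_nonneg_right hlL hnorm
      linarith
    · -- x outside intrinsic interior : uniform bound
      have hdist : δ ≤ dist x y := hsep x hx.1 hxint y (subset_closure hyA)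
      have hdist' : δ ≤ ‖x - y‖ := by rwa [dist_eq_norm] at hdist
      have hm : ∀ i, f x - l * D ≤ f (xi i) := by
        intro i
        have := hlip x hx (xi i) (hxi i)
        have h1 := (abs_le.1 this).2
        have h2 : ‖x - xi i‖ ≤ D := by
          rw [← dist_eq_norm]; exact hD x hx.1 (xi i) (hxi i).1
        have h3 : l * ‖x - xi i‖ ≤ l * D := mul_le_mul_of_nonneg_left h2 hl0
        linarith
      have hsum : f x - l * D ≤ ∑ i, w i * f (xi i) := by
        calc f x - l * D = ∑ i, w i * (f x - l * D) := by rw [← Finset.sum_mul, hw1]; ring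
        _ ≤ ∑ i, w i * f (xi i) :=
            Finset.sum_le_sum fun i _ => mul_le_mul_of_nonneg_left (hm i) (hw i)
      have hLd : l * D ≤ L * ‖x - y‖ := by
        have h0D : 0 ≤ D := le_trans dist_nonneg (hD x hx.1 x hx.1)
        have h1 : l * D / δ ≤ L := le_max_right _ _
        have h2 : l * D = (l * D / δ) * δ := by field_simp
        calc l * D = (l * D / δ) * δ := h2
        _ ≤ L * δ := mul_le_mul_of_nonneg_right h1 hδ.le
        _ ≤ L * ‖x - y‖ := mul_le_mul_of_nonneg_left hdist' (le_trans (by positivity) h1)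
      linarith
  · -- y avoids A : direct Jensen
    have hymem : y ∈ Ω \ A := ⟨hyΩ, hyA⟩
    have hjen := hf k xi w hxi hw hw1 (by rwa [← hy_def])
    rw [← hy_def] at hjen
    have hlips := hlip x hx y hymem
    have h1 := (abs_le.1 hlips).2
    have : l * ‖x - y‖ ≤ L * ‖x - y‖ := mul_le_mul_of_nonneg_right hlL hnorm
    linarith

/-- Construction of the convex extension. -/
lemma ext_lemma [FiniteDimensional ℝ E] (Ω A : Set E) (hb : Bornology.IsBounded Ω)
    (hΩ : Convex ℝ Ω) (hA : closure A ⊆ intrinsicInterior ℝ Ω)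
    (f : E → ℝ) (hf : JConvexOn (Ω \ A) f) (x₀ : E) (hx₀ : x₀ ∈ Ω \ A)
    (l : ℝ) (hl0 : 0 ≤ l)
    (hlip : ∀ x ∈ Ω \ A, ∀ y ∈ Ω \ A, |f x - f y| ≤ l * ‖x - y‖) :
    ∃ g : E → ℝ, ConvexOn ℝ Set.univ g ∧ Set.EqOn g f (Ω \ A) := by
  classical
  -- diameter bound
  obtain ⟨D, hD'⟩ := Metric.isBounded_iff.1 hb
  have hD : ∀ a ∈ Ω, ∀ b ∈ Ω, dist a b ≤ D := fun a ha b hbb => hD' ha hbb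
  have hD0 : 0 ≤ D := le_trans dist_nonneg (hD x₀ hx₀.1 x₀ hx₀.1)
  -- separation constant
  have hAbdd : Bornology.IsBounded A := hb.subset ((subset_closure.trans hA).trans
    intrinsicInterior_subset)
  have hKcompact : IsCompact (closure A) :=
    Metric.isCompact_of_isClosed_isBounded isClosed_closure hAbdd.closure
  obtain ⟨δ, hδ, hsep⟩ := sep_lemma Ω (closure A) hKcompact hA
  set L : ℝ := max l (l * D / δ) with hL_def
  have hL0 : 0 ≤ L := le_trans hl0 (le_max_left _ _)
  have key := key_lemma Ω A hΩ hA hb f hf l hl0 hlip D hD δ hδ hsep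
  -- the set of representation values
  set S : E → Set ℝ := fun z =>
    {r : ℝ | ∃ (k : ℕ) (xi : Fin k → E) (w : Fin k → ℝ),
      (∀ i, xi i ∈ Ω \ A) ∧ (∀ i, 0 ≤ w i) ∧ (∑ i, w i) = 1 ∧
      r = (∑ i, w i * f (xi i)) + L * ‖z - ∑ i, w i • xi i‖} with hS_def
  have htriv : ∀ z : E, ∀ p ∈ Ω \ A, f p + L * ‖z - p‖ ∈ S z := by
    intro z p hp
    refine ⟨1, fun _ => p, fun _ => 1, fun _ => hp, fun _ => zero_le_one, by simp, ?_⟩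
    simp
  have hSne : ∀ z : E, (S z).Nonempty := fun z => ⟨_, htriv z x₀ hx₀⟩
  have hm : ∀ z ∈ Ω \ A, f x₀ - l * D ≤ f z := by
    intro z hz
    have h1 := (abs_le.1 (hlip x₀ hx₀ z hz)).2
    have h2 : ‖x₀ - z‖ ≤ D := by rw [← dist_eq_norm]; exact hD x₀ hx₀.1 z hz.1
    nlinarith
  have hSbdd : ∀ z : E, ∀ r ∈ S z, f x₀ - l * D ≤ r := by
    rintro z r ⟨k, xi, w, hxi, hw, hw1, rfl⟩
    have h1 : f x₀ - l * D ≤ ∑ i, w i * f (xi i) := by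
      calc f x₀ - l * D = ∑ i, w i * (f x₀ - l * D) := by
            rw [← Finset.sum_mul, hw1, one_mul]
      _ ≤ ∑ i, w i * f (xi i) :=
          Finset.sum_le_sum fun i _ => mul_le_mul_of_nonneg_left (hm (xi i) (hxi i)) (hw i)
    have h2 : 0 ≤ L * ‖z - ∑ i, w i • xi i‖ := mul_nonneg hL0 (norm_nonneg _)
    linarith
  have hSbdd' : ∀ z : E, BddBelow (S z) := fun z => ⟨_, fun r hr => hSbdd z r hr⟩
  set g : E → ℝ := fun z => sInf (S z) with hg_def
  refine ⟨g, ⟨convex_univ, ?_⟩, ?_⟩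
  · -- convexity
    intro a _ b _ ta tb hta htb htab
    simp only [smul_eq_mul]
    rcases eq_or_lt_of_le hta with hta0 | hta
    · have htb1 : tb = 1 := by linarith
      rw [← hta0, htb1]; simp
    rcases eq_or_lt_of_le htb with htb0 | htb
    · have hta1 : ta = 1 := by linarith
      rw [← htb0, hta1]; simp
    -- main case : both weights positive
    have hkey : ∀ ra ∈ S a, ∀ rb ∈ S b, g (ta • a + tb • b) ≤ ta * ra + tb * rb := by
      rintro ra ⟨ka, xa, wa, hxa, hwa, hwa1, rfl⟩ rb ⟨kb, xb, wb, hxb, hwb, hwb1, rfl⟩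
      set xc : Fin (ka + kb) → E := Fin.append xa xb with hxc_def
      set wc : Fin (ka + kb) → ℝ :=
        Fin.append (fun i => ta * wa i) (fun i => tb * wb i) with hwc_def
      have hxcm : ∀ i, xc i ∈ Ω \ A := by
        intro i
        refine Fin.addCases (fun j => ?_) (fun j => ?_) i
        · simp only [hxc_def, Fin.append_left]; exact hxa j
        · simp only [hxc_def, Fin.append_right]; exact hxb j
      have hwcm : ∀ i, 0 ≤ wc i := by
        intro i
        refine Fin.addCases (fun j => ?_) (fun j => ?_) i
        · simp only [hwc_def, Fin.append_left]; exact mul_nonneg hta.le (hwa j)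
        · simp only [hwc_def, Fin.append_right]; exact mul_nonneg htb.le (hwb j)
      have hwc1 : (∑ i, wc i) = 1 := by
        rw [Fin.sum_univ_add]
        simp only [hwc_def, Fin.append_left, Fin.append_right]
        rw [← Finset.mul_sum, ← Finset.mul_sum, hwa1, hwb1]
        linarith
      have hycomb : (∑ i, wc i • xc i) =
          ta • (∑ i, wa i • xa i) + tb • (∑ i, wb i • xb i) := by
        rw [Fin.sum_univ_add]
        simp only [hwc_def, hxc_def, Fin.append_left, Fin.append_right]
        rw [Finset.smul_sum, Finset.smul_sum]
        congr 1 <;> exact Finset.sum_congr rfl fun i _ => by rw [mul_smul]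
      have hsumc : (∑ i, wc i * f (xc i)) =
          ta * (∑ i, wa i * f (xa i)) + tb * (∑ i, wb i * f (xb i)) := by
        rw [Fin.sum_univ_add]
        simp only [hwc_def, hxc_def, Fin.append_left, Fin.append_right]
        rw [Finset.mul_sum, Finset.mul_sum]
        congr 1 <;> exact Finset.sum_congr rfl fun i _ => by ring
      have hmem : (∑ i, wc i * f (xc i)) +
          L * ‖(ta • a + tb • b) - ∑ i, wc i • xc i‖ ∈ S (ta • a + tb • b) :=
        ⟨ka + kb, xc, wc, hxcm, hwcm, hwc1, rfl⟩
      have hnormle : ‖(ta • a + tb • b) - ∑ i, wc i • xc i‖ ≤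
          ta * ‖a - ∑ i, wa i • xa i‖ + tb * ‖b - ∑ i, wb i • xb i‖ := by
        rw [hycomb]
        have heq : (ta • a + tb • b) - (ta • (∑ i, wa i • xa i) + tb • (∑ i, wb i • xb i))
            = ta • (a - ∑ i, wa i • xa i) + tb • (b - ∑ i, wb i • xb i) := by
          rw [smul_sub, smul_sub]; abel
        rw [heq]
        calc ‖ta • (a - ∑ i, wa i • xa i) + tb • (b - ∑ i, wb i • xb i)‖
            ≤ ‖ta • (a - ∑ i, wa i • xa i)‖ + ‖tb • (b - ∑ i, wb i • xb i)‖ := norm_add_le _ _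
        _ = ta * ‖a - ∑ i, wa i • xa i‖ + tb * ‖b - ∑ i, wb i • xb i‖ := by
            rw [norm_smul, norm_smul, Real.norm_eq_abs, Real.norm_eq_abs,
              abs_of_pos hta, abs_of_pos htb]
      have hle := csInf_le (hSbdd' _) hmem
      calc g (ta • a + tb • b) ≤ (∑ i, wc i * f (xc i)) +
            L * ‖(ta • a + tb • b) - ∑ i, wc i • xc i‖ := hle
      _ ≤ ta * ((∑ i, wa i * f (xa i)) + L * ‖a - ∑ i, wa i • xa i‖)
            + tb * ((∑ i, wb i * f (xb i)) + L * ‖b - ∑ i, wb i • xb i‖) := by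
          rw [hsumc]
          have := mul_le_mul_of_nonneg_left hnormle hL0
          nlinarith
    -- pass to the infimum twice
    have h1 : ∀ rb ∈ S b, g (ta • a + tb • b) ≤ ta * g a + tb * rb := by
      intro rb hrb
      have h2 : (g (ta • a + tb • b) - tb * rb) / ta ≤ g a := by
        apply le_csInf (hSne a)
        intro ra hra
        rw [div_le_iff₀ hta]
        have := hkey ra hra rb hrb
        nlinarith
      rw [div_le_iff₀ hta] at h2
      nlinarith
    have h2 : (g (ta • a + tb • b) - ta * g a) / tb ≤ g b := by
      apply le_csInf (hSne b)
      intro rb hrb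
      rw [div_le_iff₀ htb]
      have := h1 rb hrb
      nlinarith
    rw [div_le_iff₀ htb] at h2
    nlinarith
  · -- g = f on Ω \ A
    intro z hz
    have hle : g z ≤ f z := by
      have := htriv z z hz
      have h2 := csInf_le (hSbdd' z) this
      simpa using h2
    have hge : f z ≤ g z := by
      apply le_csInf (hSne z)
      rintro r ⟨k, xi, w, hxi, hw, hw1, rfl⟩
      exact key z hz k xi w hxi hw hw1
    exact le_antisymm hle hge

/-- Convex boundary band extension: for bounded convex `Ω` and `A` with
`closure A ⊆ relint Ω`, a convex function on `Ω \ A` extends to a real-valued convex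
function on all of `ℝⁿ` if and only if it is Lipschitz on `Ω \ A`. -/
theorem band_extension_iff_lipschitz {n : ℕ}
    (Ω A : Set (EuclideanSpace ℝ (Fin n))) (hb : Bornology.IsBounded Ω)
    (hΩ : Convex ℝ Ω) (hA : closure A ⊆ intrinsicInterior ℝ Ω)
    (f : EuclideanSpace ℝ (Fin n) → ℝ) (hf : JConvexOn (Ω \ A) f) :
    (∃ g : EuclideanSpace ℝ (Fin n) → ℝ,
        ConvexOn ℝ Set.univ g ∧ Set.EqOn g f (Ω \ A)) ↔
      ∃ l : ℝ, ∀ x ∈ Ω \ A, ∀ y ∈ Ω \ A, |f x - f y| ≤ l * ‖x - y‖ := by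
  constructor
  · rintro ⟨g, hgc, hge⟩
    obtain ⟨r, hr⟩ := hb.subset_ball (0 : EuclideanSpace ℝ (Fin n))
    set R : ℝ := max r 0 with hR_def
    have hΩR : Ω ⊆ Metric.ball 0 (R + 1) := hr.trans
      (Metric.ball_subset_ball (by have := le_max_left r 0; simp only [hR_def]; linarith))
    have hball : ConvexOn ℝ (Metric.ball (0 : EuclideanSpace ℝ (Fin n)) (R + 2)) g :=
      hgc.subset (Set.subset_univ _) (convex_ball _ _)
    have hcont : Continuous g := hgc.locallyLipschitz.continuous
    have himg : Bornology.IsBounded (g '' Metric.ball 0 (R + 2)) := by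
      have hc : IsCompact (Metric.closedBall (0 : EuclideanSpace ℝ (Fin n)) (R + 2)) :=
        isCompact_closedBall _ _
      have := (hc.image hcont).isBounded
      exact this.subset (Set.image_mono (f := g) Metric.ball_subset_closedBall)
    obtain ⟨K, hK⟩ := hball.exists_lipschitzOnWith_of_isBounded
      (show R + 1 < R + 2 by linarith) himg
    refine ⟨K, fun x hx y hy => ?_⟩
    have hdist := hK.dist_le_mul x (hΩR hx.1) y (hΩR hy.1)
    rw [hge hx, hge hy] at *
    rw [Real.dist_eq] at hdist
    rw [← hge hx, ← hge hy]
    calc |g x - g y| ≤ K * dist x y := by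
          rw [← Real.dist_eq]; exact hK.dist_le_mul x (hΩR hx.1) y (hΩR hy.1)
    _ = K * ‖x - y‖ := by rw [dist_eq_norm]
  · rintro ⟨l, hlip⟩
    rcases Set.eq_empty_or_nonempty (Ω \ A) with he | ⟨x₀, hx₀⟩
    · refine ⟨fun _ => 0, convexOn_const _ convex_univ, ?_⟩
      rw [he]
      exact fun x hx => absurd hx (Set.notMem_empty x)
    · have hlip' : ∀ x ∈ Ω \ A, ∀ y ∈ Ω \ A, |f x - f y| ≤ (max l 0) * ‖x - y‖ := by
        intro x hx y hy
        exact (hlip x hx y hy).trans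
          (mul_le_mul_of_nonneg_right (le_max_left _ _) (norm_nonneg _))
      exact ext_lemma Ω A hb hΩ hA f hf x₀ hx₀ (max l 0) (le_max_right _ _) hlip'
end

section
/- Let γ : [0,∞) → ℝ be a C² function with γ = 0 on [0,1] and such that t ↦ γ'(t)/t is strictly increasing on (1,∞). Then the function g(x) = γ(‖x‖) on ℝ^n has positive semidefinite Hessian everywhere, and positive definite Hessian at every x with ‖x‖ > 1. Explicitly, H_g(v) at x equals (1/‖x‖)(γ'(‖x‖)‖v‖² + d(t⁻¹γ'(t))/dt|_{t=‖x‖}(x·v)²). -/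
open scoped RealInnerProductSpace

variable {n : ℕ}

private lemma norm_hasFDerivAt {x : EuclideanSpace ℝ (Fin n)} (hx : x ≠ 0) :
    HasFDerivAt (fun y : EuclideanSpace ℝ (Fin n) => ‖y‖)
      (‖x‖⁻¹ • innerSL ℝ x) x := by
  have hr : (0:ℝ) < ‖x‖ := norm_pos_iff.mpr hx
  have h1 := (hasStrictFDerivAt_norm_sq x).hasFDerivAt
  have h2 := (Real.hasDerivAt_sqrt (by positivity : ‖x‖^2 ≠ 0)).comp_hasFDerivAt x h1
  have hfn : (fun y : EuclideanSpace ℝ (Fin n) => ‖y‖)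
      = fun y => Real.sqrt (‖y‖^2) := by
    ext y; rw [Real.sqrt_sq (norm_nonneg _)]
  rw [hfn]
  refine h2.congr_fderiv ?_
  ext y
  rw [Real.sqrt_sq (norm_nonneg x)]
  simp only [ContinuousLinearMap.smul_apply, ContinuousLinearMap.coe_smul', Pi.smul_apply,
    smul_eq_mul]
  field_simp
  ring

private lemma grad_hasFDerivAt {γ : ℝ → ℝ} (hγ : ContDiff ℝ 2 γ)
    {x : EuclideanSpace ℝ (Fin n)} (hx : x ≠ 0) :
    HasFDerivAt (fun y : EuclideanSpace ℝ (Fin n) => γ ‖y‖)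
      ((deriv γ ‖x‖ / ‖x‖) • innerSL ℝ x) x := by
  have hd : HasDerivAt γ (deriv γ ‖x‖) ‖x‖ :=
    ((hγ.differentiable two_ne_zero) ‖x‖).hasDerivAt
  have := hd.comp_hasFDerivAt x (norm_hasFDerivAt hx)
  refine this.congr_fderiv ?_
  rw [smul_smul, div_eq_mul_inv]

private lemma fderiv_eventually {γ : ℝ → ℝ} (hγ : ContDiff ℝ 2 γ)
    {x : EuclideanSpace ℝ (Fin n)} (hx : x ≠ 0) :
    (fun y => fderiv ℝ (fun y : EuclideanSpace ℝ (Fin n) => γ ‖y‖) y)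
      =ᶠ[nhds x] fun y => (deriv γ ‖y‖ / ‖y‖) • innerSL ℝ y := by
  filter_upwards [IsOpen.mem_nhds isOpen_compl_singleton hx] with y hy
  exact (grad_hasFDerivAt hγ hy).fderiv

private lemma hessian_formula {γ : ℝ → ℝ} (hγ : ContDiff ℝ 2 γ)
    {x : EuclideanSpace ℝ (Fin n)} (v : EuclideanSpace ℝ (Fin n)) (hx : x ≠ 0) :
    iteratedFDeriv ℝ 2 (fun y : EuclideanSpace ℝ (Fin n) => γ ‖y‖) x ![v, v] =
      (1 / ‖x‖) * (deriv γ ‖x‖ * ‖v‖ ^ 2 +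
        deriv (fun t => deriv γ t / t) ‖x‖ * ⟪x, v⟫ ^ 2) := by
  set g : EuclideanSpace ℝ (Fin n) → ℝ := fun y => γ ‖y‖ with hg
  have hr : (0:ℝ) < ‖x‖ := norm_pos_iff.mpr hx
  set h : ℝ → ℝ := fun t => deriv γ t / t with hh
  -- differentiability of deriv γ
  have hγ' : ContDiff ℝ 1 (deriv γ) := by
    have : ContDiff ℝ (1+1) γ := by norm_num; exact hγ
    exact (contDiff_succ_iff_deriv.mp this).2.2
  have hhd : HasDerivAt h (deriv h ‖x‖) ‖x‖ := by
    refine DifferentiableAt.hasDerivAt ?_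
    exact ((hγ'.differentiable one_ne_zero) ‖x‖).div differentiableAt_id hr.ne'
  -- g is C² at x
  have hD2 : ContDiffAt ℝ 2 g x := (hγ.contDiffAt).comp x (contDiffAt_norm (𝕜 := ℝ) hx)
  have hdiff : DifferentiableAt ℝ (fderiv ℝ g) x := by
    have : ContDiffAt ℝ 1 (fderiv ℝ g) x := hD2.fderiv_right (by norm_num)
    exact this.differentiableAt one_ne_zero
  rw [iteratedFDeriv_two_apply]
  simp only [Matrix.cons_val_zero, Matrix.cons_val_one, Matrix.head_cons]
  -- step: reduce to scalar function
  have step1 : fderiv ℝ (fderiv ℝ g) x v v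
      = fderiv ℝ (fun y => fderiv ℝ g y v) x v := by
    rw [fderiv_clm_apply hdiff (differentiableAt_const v)]
    simp
  -- the scalar function is eventually h(‖y‖) * ⟪y,v⟫
  have step2 : (fun y => fderiv ℝ g y v) =ᶠ[nhds x]
      fun y => h ‖y‖ * ⟪y, v⟫ := by
    filter_upwards [fderiv_eventually hγ hx] with y hy
    rw [hy]
    simp [hh]
  -- derivative of the scalar function
  have hA : HasFDerivAt (fun y : EuclideanSpace ℝ (Fin n) => h ‖y‖)
      ((deriv h ‖x‖) • (‖x‖⁻¹ • innerSL ℝ x)) x :=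
    hhd.comp_hasFDerivAt x (norm_hasFDerivAt hx)
  have hB : HasFDerivAt (fun y : EuclideanSpace ℝ (Fin n) => ⟪y, v⟫)
      ((fderivInnerCLM ℝ (x, v)).comp ((ContinuousLinearMap.id ℝ _).prod 0)) x :=
    (hasFDerivAt_id x).inner ℝ (hasFDerivAt_const v x)
  have hAB := hA.mul hB
  have step3 : fderiv ℝ (fun y => h ‖y‖ * ⟪y, v⟫) x v
      = h ‖x‖ * ⟪v, v⟫ + ⟪x, v⟫ * (deriv h ‖x‖ * (‖x‖⁻¹ * ⟪x, v⟫)) := by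
    rw [show (fun y => h ‖y‖ * ⟪y, v⟫) = (fun y => h ‖y‖) * (fun y => ⟪y, v⟫) from rfl, hAB.fderiv]
    simp [fderivInnerCLM_apply, real_inner_comm]
  rw [step1, step2.fderiv_eq, step3, real_inner_self_eq_norm_sq]
  simp only [hh]
  field_simp

private lemma zero_closure {f : ℝ → ℝ} (hf : Continuous f)
    (h : ∀ t ∈ Set.Ioo (0:ℝ) 1, f t = 0) : f 1 = 0 := by
  have hne : (nhdsWithin (1:ℝ) (Set.Ioo 0 1)).NeBot := by
    rw [← mem_closure_iff_nhdsWithin_neBot, closure_Ioo one_ne_zero.symm]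
    exact Set.right_mem_Icc.mpr zero_le_one
  have h1 : Filter.Tendsto f (nhdsWithin 1 (Set.Ioo 0 1)) (nhds (f 1)) :=
    (hf.continuousAt).continuousWithinAt.tendsto
  have h2 : Filter.Tendsto f (nhdsWithin 1 (Set.Ioo 0 1)) (nhds 0) := by
    refine Filter.Tendsto.congr' ?_ tendsto_const_nhds
    filter_upwards [self_mem_nhdsWithin] with t ht
    exact (h t ht).symm
  exact tendsto_nhds_unique h1 h2

private lemma deriv_zero_Ioc {γ : ℝ → ℝ} (hγ : ContDiff ℝ 2 γ)
    (h0 : ∀ t ∈ Set.Icc (0 : ℝ) 1, γ t = 0) :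
    ∀ t ∈ Set.Ioc (0:ℝ) 1, deriv γ t = 0 := by
  have hcont : Continuous (deriv γ) := by
    have : ContDiff ℝ (1+1) γ := by norm_num; exact hγ
    exact ((contDiff_succ_iff_deriv.mp this).2.2.differentiable one_ne_zero).continuous
  have hIoo : ∀ t ∈ Set.Ioo (0:ℝ) 1, deriv γ t = 0 := by
    intro t ht
    have hev : γ =ᶠ[nhds t] fun _ => 0 := by
      filter_upwards [Ioo_mem_nhds ht.1 ht.2] with u hu
      exact h0 u ⟨hu.1.le, hu.2.le⟩
    rw [hev.deriv_eq, deriv_const]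
  intro t ht
  rcases eq_or_lt_of_le ht.2 with rfl | hlt
  · exact zero_closure hcont hIoo
  · exact hIoo t ⟨ht.1, hlt⟩

private lemma deriv2_zero_Ioc {γ : ℝ → ℝ} (hγ : ContDiff ℝ 2 γ)
    (h0 : ∀ t ∈ Set.Icc (0 : ℝ) 1, γ t = 0) :
    ∀ t ∈ Set.Ioc (0:ℝ) 1, deriv (deriv γ) t = 0 := by
  have hγ' : ContDiff ℝ 1 (deriv γ) := by
    have : ContDiff ℝ (1+1) γ := by norm_num; exact hγ
    exact (contDiff_succ_iff_deriv.mp this).2.2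
  have hcont : Continuous (deriv (deriv γ)) :=
    (contDiff_one_iff_deriv.mp hγ').2
  have hIoo : ∀ t ∈ Set.Ioo (0:ℝ) 1, deriv (deriv γ) t = 0 := by
    intro t ht
    have hev : deriv γ =ᶠ[nhds t] fun _ => 0 := by
      filter_upwards [Ioo_mem_nhds ht.1 ht.2] with u hu
      exact deriv_zero_Ioc hγ h0 u ⟨hu.1, hu.2.le⟩
    rw [hev.deriv_eq, deriv_const]
  intro t ht
  rcases eq_or_lt_of_le ht.2 with rfl | hlt
  · exact zero_closure hcont hIoo
  · exact hIoo t ⟨ht.1, hlt⟩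

private lemma derivh_zero_Ioc {γ : ℝ → ℝ} (hγ : ContDiff ℝ 2 γ)
    (h0 : ∀ t ∈ Set.Icc (0 : ℝ) 1, γ t = 0) :
    ∀ t ∈ Set.Ioc (0:ℝ) 1, deriv (fun t => deriv γ t / t) t = 0 := by
  have hγ' : ContDiff ℝ 1 (deriv γ) := by
    have : ContDiff ℝ (1+1) γ := by norm_num; exact hγ
    exact (contDiff_succ_iff_deriv.mp this).2.2
  intro t ht
  rw [show deriv (fun t => deriv γ t / t) t = deriv (deriv γ / id) t from rfl,
    deriv_div ((hγ'.differentiable one_ne_zero) t) differentiableAt_id ht.1.ne']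
  rw [deriv_zero_Ioc hγ h0 t ht, deriv2_zero_Ioc hγ h0 t ht]
  simp

private lemma h_nonneg_pos {γ : ℝ → ℝ} (hγ : ContDiff ℝ 2 γ)
    (h0 : ∀ t ∈ Set.Icc (0 : ℝ) 1, γ t = 0)
    (hmono : StrictMonoOn (fun t => deriv γ t / t) (Set.Ioi (1 : ℝ)))
    {r : ℝ} (hr : 1 < r) : 0 < deriv γ r := by
  set h : ℝ → ℝ := fun t => deriv γ t / t with hh
  have hγ' : ContDiff ℝ 1 (deriv γ) := by
    have : ContDiff ℝ (1+1) γ := by norm_num; exact hγ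
    exact (contDiff_succ_iff_deriv.mp this).2.2
  have hcont : Continuous (deriv γ) :=
    (hγ'.differentiable one_ne_zero).continuous
  -- h tends to 0 at 1 from the right
  have hlim : Filter.Tendsto h (nhdsWithin 1 (Set.Ioi 1)) (nhds 0) := by
    have hc : ContinuousAt h 1 := by
      apply ContinuousAt.div hcont.continuousAt continuousAt_id one_ne_zero
    have h1 : h 1 = 0 := by
      simp [hh, deriv_zero_Ioc hγ h0 1 ⟨zero_lt_one, le_rfl⟩]
    exact h1 ▸ hc.continuousWithinAt.tendsto
  set s : ℝ := (1 + r) / 2 with hs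
  have hs1 : 1 < s := by rw [hs]; linarith
  have hsr : s < r := by rw [hs]; linarith
  have hsnn : 0 ≤ h s := by
    refine le_of_tendsto hlim ?_
    filter_upwards [Ioo_mem_nhdsGT_of_mem ⟨le_rfl, hs1⟩] with u hu
    exact (hmono hu.1 hs1 hu.2).le
  have hpos : 0 < h r := lt_of_le_of_lt hsnn (hmono hs1 (lt_trans hs1 hsr) hsr)
  have : deriv γ r = h r * r := by
    rw [hh]; field_simp
  rw [this]
  positivity

private lemma derivh_nonneg {γ : ℝ → ℝ} (hγ : ContDiff ℝ 2 γ)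
    (hmono : StrictMonoOn (fun t => deriv γ t / t) (Set.Ioi (1 : ℝ)))
    {r : ℝ} (hr : 1 < r) : 0 ≤ deriv (fun t => deriv γ t / t) r := by
  set h : ℝ → ℝ := fun t => deriv γ t / t with hh
  have hγ' : ContDiff ℝ 1 (deriv γ) := by
    have : ContDiff ℝ (1+1) γ := by norm_num; exact hγ
    exact (contDiff_succ_iff_deriv.mp this).2.2
  have hhd : HasDerivAt h (deriv h r) r :=
    (((hγ'.differentiable one_ne_zero) r).div differentiableAt_id
      (by linarith : r ≠ 0)).hasDerivAt
  have hw : HasDerivWithinAt h (deriv h r) (Set.Ioi r) r := hhd.hasDerivWithinAt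
  rw [hasDerivWithinAt_iff_tendsto_slope] at hw
  rw [show Set.Ioi r \ {r} = Set.Ioi r by simp] at hw
  refine ge_of_tendsto hw ?_
  filter_upwards [self_mem_nhdsWithin] with u hu
  rw [slope_def_field]
  have h1 : h r < h u := hmono hr (lt_trans hr hu) hu
  have h2 : (0:ℝ) < u - r := by simpa using hu
  exact div_nonneg (sub_nonneg.mpr h1.le) h2.le

/-- For a C² function `γ` vanishing on `[0,1]` with `t ↦ γ'(t)/t` strictly increasing on
`(1,∞)`, the radial function `g(x) = γ(‖x‖)` on `ℝⁿ` has positive semidefinite Hessian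
everywhere, positive definite Hessian whenever `‖x‖ > 1`, and its Hessian quadratic form
at `x ≠ 0` is given by the explicit formula
`(1/‖x‖)(γ'(‖x‖)‖v‖² + (d/dt)(t⁻¹γ'(t))|_{t=‖x‖} ⟨x,v⟩²)`. -/
theorem radial_hessian {n : ℕ} (γ : ℝ → ℝ) (hγ : ContDiff ℝ 2 γ)
    (h0 : ∀ t ∈ Set.Icc (0 : ℝ) 1, γ t = 0)
    (hmono : StrictMonoOn (fun t => deriv γ t / t) (Set.Ioi (1 : ℝ))) :
    (∀ (x v : EuclideanSpace ℝ (Fin n)),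
        0 ≤ iteratedFDeriv ℝ 2 (fun y : EuclideanSpace ℝ (Fin n) => γ ‖y‖) x ![v, v]) ∧
    (∀ (x v : EuclideanSpace ℝ (Fin n)), 1 < ‖x‖ → v ≠ 0 →
        0 < iteratedFDeriv ℝ 2 (fun y : EuclideanSpace ℝ (Fin n) => γ ‖y‖) x ![v, v]) ∧
    (∀ (x v : EuclideanSpace ℝ (Fin n)), x ≠ 0 →
        iteratedFDeriv ℝ 2 (fun y : EuclideanSpace ℝ (Fin n) => γ ‖y‖) x ![v, v] =
          (1 / ‖x‖) * (deriv γ ‖x‖ * ‖v‖ ^ 2 +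
            deriv (fun t => deriv γ t / t) ‖x‖ * ⟪x, v⟫ ^ 2)) := by
  refine ⟨?_, ?_, fun x v hx => hessian_formula hγ v hx⟩
  · -- positive semidefinite everywhere
    intro x v
    rcases eq_or_ne x 0 with rfl | hx
    · -- x = 0 : the function vanishes near 0
      have hev : (fun y : EuclideanSpace ℝ (Fin n) => γ ‖y‖)
          =ᶠ[nhdsWithin 0 Set.univ] fun _ => (0:ℝ) := by
        rw [nhdsWithin_univ]
        filter_upwards [Metric.ball_mem_nhds 0 one_pos] with y hy
        exact h0 ‖y‖ ⟨norm_nonneg y, (mem_ball_zero_iff.mp hy).le⟩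
      have h00 : γ ‖(0 : EuclideanSpace ℝ (Fin n))‖ = 0 := by
        simpa using h0 0 ⟨le_rfl, zero_le_one⟩
      have := hev.iteratedFDerivWithin_eq (𝕜 := ℝ) h00 2
      rw [iteratedFDerivWithin_univ, iteratedFDerivWithin_univ] at this
      rw [this, iteratedFDeriv_zero_fun]
      simp
    · rw [hessian_formula hγ v hx]
      have hr : (0:ℝ) < ‖x‖ := norm_pos_iff.mpr hx
      rcases le_or_gt ‖x‖ 1 with hle | hgt
      · rw [deriv_zero_Ioc hγ h0 ‖x‖ ⟨hr, hle⟩, derivh_zero_Ioc hγ h0 ‖x‖ ⟨hr, hle⟩]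
        simp
      · have h1 := h_nonneg_pos hγ h0 hmono hgt
        have h2 := derivh_nonneg hγ hmono hgt
        have : 0 ≤ deriv γ ‖x‖ * ‖v‖ ^ 2 + deriv (fun t => deriv γ t / t) ‖x‖ * ⟪x, v⟫ ^ 2 :=
          add_nonneg (mul_nonneg h1.le (sq_nonneg _)) (mul_nonneg h2 (sq_nonneg _))
        exact mul_nonneg (div_nonneg zero_le_one hr.le) this
  · -- positive definite for ‖x‖ > 1
    intro x v hx hv
    have hx0 : x ≠ 0 := by
      intro h; rw [h] at hx; simp at hx; linarith
    rw [hessian_formula hγ v hx0]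
    have h1 := h_nonneg_pos hγ h0 hmono hx
    have h2 := derivh_nonneg hγ hmono hx
    have hv2 : (0:ℝ) < ‖v‖ ^ 2 := pow_pos (norm_pos_iff.mpr hv) 2
    have hr : (0:ℝ) < ‖x‖ := by linarith
    have : 0 < deriv γ ‖x‖ * ‖v‖ ^ 2 + deriv (fun t => deriv γ t / t) ‖x‖ * ⟪x, v⟫ ^ 2 := by
      have := mul_pos h1 hv2
      nlinarith [mul_nonneg h2 (sq_nonneg (⟪x, v⟫ : ℝ))]
    exact mul_pos (div_pos one_pos hr) this
end

section
/- In polar coordinates on ℝ², the function f(r,θ) = r² + aθ on the slit annulus Ω = {re^{iθ} : |r-1| < ε, 0 < θ < 2π} (with ε small and 0 < |a| < 2(1-ε)²) is locally convex (has positive definite Hessian at every point of Ω) but is not convex on Ω: there exist points x₁,…,xₖ ∈ Ω and a convex combination x ∈ Ω violating Jensen's inequality. -/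
open scoped BigOperators Real

/-- The continuous angular coordinate `θ ∈ (0, 2π]` on the plane slit along the
nonnegative real axis. -/
noncomputable def theta (z : ℂ) : ℝ :=
  if 0 < Complex.arg z then Complex.arg z else Complex.arg z + 2 * π

lemma theta_pos (z : ℂ) : 0 < theta z := by
  unfold theta
  split_ifs with h
  · exact h
  · nlinarith [Complex.neg_pi_lt_arg z, Real.pi_pos]

lemma arg_ne_zero_of_theta_lt {z : ℂ} (h : theta z < 2 * π) : Complex.arg z ≠ 0 := by
  intro h0
  rw [theta, h0] at h
  norm_num at h

lemma neg_mem_slitPlane {z : ℂ} (h : Complex.arg z ≠ 0) : -z ∈ Complex.slitPlane := by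
  rw [Complex.mem_slitPlane_iff]
  rw [Ne, Complex.arg_eq_zero_iff] at h
  push_neg at h
  simp only [Complex.neg_re, Complex.neg_im, neg_ne_zero]
  by_cases hre : 0 ≤ z.re
  · exact Or.inr (h hre)
  · exact Or.inl (by push_neg at hre; linarith)

lemma theta_eq {z : ℂ} (h : Complex.arg z ≠ 0) : theta z = π + Complex.arg (-z) := by
  rcases lt_trichotomy z.im 0 with him | him | him
  · have hlt : Complex.arg z < 0 := Complex.arg_neg_iff.mpr him
    rw [Complex.arg_neg_eq_arg_add_pi_of_im_neg him, theta, if_neg (by linarith)]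
    ring
  · have hre : z.re < 0 := by
      by_contra hre
      push_neg at hre
      exact h (Complex.arg_eq_zero_iff.mpr ⟨hre, him⟩)
    have hπ : Complex.arg z = π := Complex.arg_eq_pi_iff.mpr ⟨hre, him⟩
    have h0 : Complex.arg (-z) = 0 :=
      Complex.arg_eq_zero_iff.mpr ⟨by simp; linarith, by simp [him]⟩
    rw [theta, hπ, h0, if_pos Real.pi_pos]
    ring
  · have hgt : 0 < Complex.arg z := by
      have hne : Complex.arg z ≠ 0 := h
      have hnlt : ¬ Complex.arg z < 0 := by
        rw [Complex.arg_neg_iff]; linarith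
      exact lt_of_le_of_ne (not_lt.mp hnlt) (Ne.symm hne)
    rw [Complex.arg_neg_eq_arg_sub_pi_of_im_pos him, theta, if_pos hgt]
    ring

lemma theta_conj {z : ℂ} (h : theta z < 2 * π) :
    theta ((starRingEnd ℂ) z) = 2 * π - theta z := by
  have hne : Complex.arg z ≠ 0 := arg_ne_zero_of_theta_lt h
  rcases eq_or_ne (Complex.arg z) π with hπ | hπ
  · rw [theta, theta, Complex.arg_conj, if_pos hπ, hπ, if_pos Real.pi_pos]
    ring
  · rw [theta, theta, Complex.arg_conj, if_neg hπ]
    rcases lt_or_ge 0 (Complex.arg z) with hpos | hle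
    · rw [if_neg (by linarith), if_pos hpos]
      ring
    · have hlt : Complex.arg z < 0 := lt_of_le_of_ne hle hne
      rw [if_pos (by linarith), if_neg (by linarith)]
      ring

open Complex Metric in
lemma key_convex {a c : ℝ} (hc : 0 < c) (hac : |a| ≤ 2 * c ^ 2) (z₀ : ℂ) (δ : ℝ)
    (hB : ∀ w ∈ ball z₀ δ, c ≤ ‖w‖ ∧ -w ∈ slitPlane) :
    ConvexOn ℝ (ball z₀ δ)
      (fun w => ‖w‖ ^ 2 + a * (π + Complex.arg (-w))) := by
  refine ⟨convex_ball z₀ δ, ?_⟩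
  intro x hx y hy p q hp hq hpq
  set v : ℂ := y - x with hv
  set u : ℝ → ℂ := fun t => x + (t : ℂ) * v with hu
  have hmemu : ∀ t ∈ Set.Icc (0:ℝ) 1, u t ∈ ball z₀ δ := by
    intro t ht
    have h1 : (1 - t) • x + t • y ∈ ball z₀ δ :=
      (convex_ball z₀ δ) hx hy (by linarith [ht.2]) ht.1 (by ring)
    convert h1 using 1
    simp only [hu, hv, Complex.real_smul]
    push_cast
    ring
  set g : ℝ → ℝ := fun t =>
    ((x.re + t * v.re) ^ 2 + (x.im + t * v.im) ^ 2) + a * (π + (Complex.log (-u t)).im)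
    with hg
  set G : ℝ → ℝ := fun t =>
    (2 * (x.re + t * v.re) * v.re + 2 * (x.im + t * v.im) * v.im) + a * (v / u t).im with hG
  have hune : ∀ t, u t ∈ ball z₀ δ → u t ≠ 0 := by
    intro t ht h0
    have h1 := (hB _ ht).1
    rw [h0] at h1
    simp at h1
    linarith
  have hder : ∀ t, u t ∈ ball z₀ δ → HasDerivAt g (G t) t := by
    intro t ht
    have hofReal : HasDerivAt (fun s : ℝ => (s : ℂ)) 1 t := by
      simpa using (hasDerivAt_id t).ofReal_comp
    have hu' : HasDerivAt u v t := by
      simpa [hu] using ((hofReal.mul_const v).const_add x)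
    have hbre : HasDerivAt (fun s : ℝ => x.re + s * v.re) v.re t := by
      simpa using ((hasDerivAt_id t).mul_const v.re).const_add x.re
    have hbim : HasDerivAt (fun s : ℝ => x.im + s * v.im) v.im t := by
      simpa using ((hasDerivAt_id t).mul_const v.im).const_add x.im
    have h1 : HasDerivAt (fun s : ℝ => (x.re + s * v.re) ^ 2)
        (2 * (x.re + t * v.re) * v.re) t := by
      have := hbre.fun_pow 2
      norm_num at this
      convert this using 1
      try ring
    have h2 : HasDerivAt (fun s : ℝ => (x.im + s * v.im) ^ 2)
        (2 * (x.im + t * v.im) * v.im) t := by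
      have := hbim.fun_pow 2
      norm_num at this
      convert this using 1
      try ring
    have hslit : -u t ∈ slitPlane := (hB _ ht).2
    have hlog : HasDerivAt (fun s => Complex.log (-u s)) (-v / -u t) t :=
      HasDerivAt.clog_real (hu'.neg) hslit
    have him0 : HasDerivAt (fun s => (Complex.log (-u s)).im) ((-v / -u t).im) t := by
      have := Complex.imCLM.hasFDerivAt.comp_hasDerivAt t hlog
      exact this
    have htot := (h1.fun_add h2).fun_add (((him0.const_add π).const_mul a))
    have hGt : G t = (2 * (x.re + t * v.re) * v.re + 2 * (x.im + t * v.im) * v.im)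
        + a * ((-v / -u t).im) := by
      rw [hG]
      simp only [neg_div_neg_eq]
    rw [hg, hGt]
    convert htot using 1
  have hmono : MonotoneOn G (Set.Ioo (0:ℝ) 1) := by
    intro t1 ht1 t2 ht2 h12
    have hm1 : u t1 ∈ ball z₀ δ := hmemu t1 (Set.mem_Icc_of_Ioo ht1)
    have hm2 : u t2 ∈ ball z₀ δ := hmemu t2 (Set.mem_Icc_of_Ioo ht2)
    have hne1 : u t1 ≠ 0 := hune t1 hm1
    have hne2 : u t2 ≠ 0 := hune t2 hm2
    set qq : ℝ := (v ^ 2 / (u t1 * u t2)).im with hqq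
    have hne1' : (x + (t1 : ℂ) * v) ≠ 0 := by simpa [hu] using hne1
    have hne2' : (x + (t2 : ℂ) * v) ≠ 0 := by simpa [hu] using hne2
    have hC : v / (x + (t2 : ℂ) * v) - v / (x + (t1 : ℂ) * v)
        = -(((t2 - t1 : ℝ) : ℂ) * (v ^ 2 / ((x + (t1 : ℂ) * v) * (x + (t2 : ℂ) * v)))) := by
      rw [div_sub_div _ _ hne2' hne1', mul_div_assoc', ← neg_div,
        div_eq_div_iff (mul_ne_zero hne2' hne1') (mul_ne_zero hne1' hne2')]
      push_cast
      ring
    have hcim : (v / u t2).im - (v / u t1).im = -((t2 - t1) * qq) := by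
      rw [← Complex.sub_im, hqq]
      simp only [hu]
      rw [hC]
      simp [Complex.mul_im, Complex.ofReal_re, Complex.ofReal_im]
      try ring
    have habs1 : c ≤ ‖u t1‖ := (hB _ hm1).1
    have habs2 : c ≤ ‖u t2‖ := (hB _ hm2).1
    have hqbd : |qq| * (‖u t1‖ * ‖u t2‖) ≤ ‖v‖ ^ 2 := by
      have h1 := Complex.abs_im_le_norm (v ^ 2 / (u t1 * u t2))
      rw [norm_div, norm_mul, norm_pow] at h1
      have hpos : 0 < ‖u t1‖ * ‖u t2‖ :=
        mul_pos (lt_of_lt_of_le hc habs1) (lt_of_lt_of_le hc habs2)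
      exact (le_div_iff₀ hpos).mp h1
    have hnv : v.re ^ 2 + v.im ^ 2 = ‖v‖ ^ 2 := by
      rw [Complex.sq_norm, Complex.normSq_apply]
      ring
    have haq : a * qq ≤ 2 * ‖v‖ ^ 2 := by
      have h7 : a * qq ≤ |a| * |qq| := by
        calc a * qq ≤ |a * qq| := le_abs_self _
        _ = |a| * |qq| := abs_mul a qq
      have h8 : |a| * |qq| ≤ 2 * c ^ 2 * |qq| :=
        mul_le_mul_of_nonneg_right hac (abs_nonneg qq)
      have h9 : c ^ 2 * |qq| ≤ ‖u t1‖ * ‖u t2‖ * |qq| := by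
        apply mul_le_mul_of_nonneg_right _ (abs_nonneg qq)
        calc c ^ 2 = c * c := sq c
        _ ≤ _ := mul_le_mul habs1 habs2 hc.le (norm_nonneg _)
      nlinarith [abs_nonneg qq]
    have hdiffG : G t2 - G t1 = (t2 - t1) * (2 * (v.re ^ 2 + v.im ^ 2) - a * qq) := by
      simp only [hG]
      linear_combination a * hcim
    rw [hnv] at hdiffG
    nlinarith [hdiffG, haq, hnv]
  have hcont : ContinuousOn g (Set.Icc (0:ℝ) 1) := fun t ht =>
    ((hder t (hmemu t ht)).continuousAt).continuousWithinAt
  have hdiffOn : DifferentiableOn ℝ g (interior (Set.Icc (0:ℝ) 1)) := by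
    rw [interior_Icc]
    exact fun t ht =>
      ((hder t (hmemu t (Set.mem_Icc_of_Ioo ht))).differentiableAt).differentiableWithinAt
  have hmder : MonotoneOn (deriv g) (interior (Set.Icc (0:ℝ) 1)) := by
    rw [interior_Icc]
    intro t1 h1 t2 h2 h12
    rw [(hder t1 (hmemu t1 (Set.mem_Icc_of_Ioo h1))).deriv,
      (hder t2 (hmemu t2 (Set.mem_Icc_of_Ioo h2))).deriv]
    exact hmono h1 h2 h12
  have hcvx : ConvexOn ℝ (Set.Icc (0:ℝ) 1) g :=
    MonotoneOn.convexOn_of_deriv (convex_Icc 0 1) hcont hdiffOn hmder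
  have hkey := hcvx.2 (Set.left_mem_Icc.mpr zero_le_one) (Set.right_mem_Icc.mpr zero_le_one)
    hp hq hpq
  have hq' : p • (0:ℝ) + q • (1:ℝ) = q := by
    simp [smul_eq_mul]
  rw [hq'] at hkey
  have hgeq : ∀ t, u t ∈ ball z₀ δ → g t = ‖u t‖ ^ 2 + a * (π + Complex.arg (-u t)) := by
    intro t ht
    rw [hg]
    simp only [Complex.log_im]
    congr 1
    rw [Complex.sq_norm, Complex.normSq_apply]
    simp only [hu]
    simp
    ring
  have hu0 : u 0 = x := by simp [hu]
  have hu1 : u 1 = y := by simp [hu, hv]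
  have hupq : p • x + q • y = u q := by
    have hpq' : (p : ℂ) + (q : ℂ) = 1 := by
      push_cast
      exact_mod_cast congrArg (fun r : ℝ => (r : ℂ)) hpq
    simp only [hu, hv, Complex.real_smul]
    linear_combination x * hpq'
  have e0 := hgeq 0 (hmemu 0 (Set.left_mem_Icc.mpr zero_le_one))
  have e1 := hgeq 1 (hmemu 1 (Set.right_mem_Icc.mpr zero_le_one))
  have eq' := hgeq q (hmemu q ⟨hq, by linarith⟩)
  rw [eq', e0, e1, hu0, hu1] at hkey
  simp only [smul_eq_mul]
  rw [hupq]
  exact hkey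

set_option maxHeartbeats 1000000 in
lemma not_part (a ε : ℝ) (hε : 0 < ε) (hε1 : ε < 1) (hapos : 0 < a) :
    ¬ ∀ (k : ℕ) (x : Fin k → ℂ) (w : Fin k → ℝ),
      (∀ i, x i ∈ {z : ℂ | |‖z‖ - 1| < ε ∧ 0 < theta z ∧ theta z < 2 * π}) →
      (∀ i, 0 ≤ w i) → (∑ i, w i) = 1 →
      (∑ i, w i • x i) ∈ {z : ℂ | |‖z‖ - 1| < ε ∧ 0 < theta z ∧ theta z < 2 * π} →
      (fun z => ‖z‖ ^ 2 + a * theta z) (∑ i, w i • x i) ≤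
        ∑ i, w i * (fun z => ‖z‖ ^ 2 + a * theta z) (x i) := by
  intro h
  obtain ⟨δ, hδ0, hδε, hδa, hδ1⟩ : ∃ δ : ℝ, 0 < δ ∧ δ ≤ ε / 2 ∧ δ ≤ a / 2 ∧ δ ≤ 1 / 2 := by
    refine ⟨min ε (min a 1) / 2, ?_, ?_, ?_, ?_⟩
    · have : 0 < min ε (min a 1) := lt_min hε (lt_min hapos one_pos)
      linarith
    · have := min_le_left ε (min a 1)
      linarith
    · have := (min_le_right ε (min a 1)).trans (min_le_left a 1)
      linarith
    · have := (min_le_right ε (min a 1)).trans (min_le_right a 1)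
      linarith
  obtain ⟨η, hη0, hη8⟩ : ∃ η : ℝ, 0 < η ∧ η ≤ 1 / 8 := ⟨1 / 8, by norm_num, le_refl _⟩
  have hπ3 := Real.pi_gt_three
  have hsinpos : 0 < Real.sin δ := Real.sin_pos_of_pos_of_lt_pi hδ0 (by linarith)
  have hsinle : Real.sin δ ≤ δ := Real.sin_le hδ0.le
  have hcos : 1 - δ ^ 2 / 2 ≤ Real.cos δ := Real.one_sub_sq_div_two_le_cos
  have hcos1 : Real.cos δ ≤ 1 := Real.cos_le_one δ
  have hsin1 : Real.sin δ ≤ 1 := Real.sin_le_one δ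
  have hpyth := Real.sin_sq_add_cos_sq δ
  set x₁ : ℂ := (Real.cos δ : ℂ) + (Real.sin δ : ℂ) * Complex.I with hx1def
  set x₂ : ℂ := (Real.cos δ : ℂ) - (Real.sin δ : ℂ) * Complex.I with hx2def
  have harg1 : Complex.arg x₁ = δ := by
    rw [hx1def, Complex.ofReal_cos, Complex.ofReal_sin]
    exact Complex.arg_cos_add_sin_mul_I ⟨by linarith, by linarith⟩
  have hx2eq : x₂ = (Real.cos (-δ) : ℂ) + (Real.sin (-δ) : ℂ) * Complex.I := by
    rw [hx2def, Real.cos_neg, Real.sin_neg]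
    push_cast
    ring
  have harg2 : Complex.arg x₂ = -δ := by
    rw [hx2eq, Complex.ofReal_cos, Complex.ofReal_sin]
    exact Complex.arg_cos_add_sin_mul_I ⟨by linarith, by linarith⟩
  have habs1 : ‖x₁‖ = 1 := by
    rw [hx1def, Complex.ofReal_cos, Complex.ofReal_sin]
    exact Complex.norm_cos_add_sin_mul_I δ
  have habs2 : ‖x₂‖ = 1 := by
    rw [hx2eq, Complex.ofReal_cos, Complex.ofReal_sin]
    exact Complex.norm_cos_add_sin_mul_I (-δ)
  have hth1 : theta x₁ = δ := by rw [theta, harg1, if_pos hδ0]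
  have hth2 : theta x₂ = 2 * π - δ := by
    rw [theta, harg2, if_neg (by linarith)]
    ring
  set s : ℂ := (Real.cos δ : ℂ) - ((2 * η * Real.sin δ : ℝ) : ℂ) * Complex.I with hsdef
  have hsre : s.re = Real.cos δ := by
    simp only [hsdef, Complex.sub_re, Complex.mul_re, Complex.I_re, Complex.I_im,
      Complex.ofReal_re, Complex.ofReal_im]
    ring
  have hsim : s.im = -(2 * η * Real.sin δ) := by
    simp only [hsdef, Complex.sub_im, Complex.mul_im, Complex.I_re, Complex.I_im,
      Complex.ofReal_re, Complex.ofReal_im]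
    ring
  have hcospos : (0:ℝ) < Real.cos δ := by nlinarith
  have himneg : s.im < 0 := by rw [hsim]; nlinarith
  have hargs_neg : Complex.arg s < 0 := Complex.arg_neg_iff.mpr himneg
  have hths : theta s = Complex.arg s + 2 * π := by
    rw [theta, if_neg (by linarith)]
  have habs_s_sq : ‖s‖ ^ 2 = Real.cos δ ^ 2 + (2 * η * Real.sin δ) ^ 2 := by
    rw [Complex.sq_norm, Complex.normSq_apply, hsre, hsim]
    ring
  have hsne : s ≠ 0 := by
    intro h0
    rw [h0] at hsre
    simp at hsre
    linarith
  have habs_s_pos : 0 < ‖s‖ := norm_pos_iff.mpr hsne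
  have habs_lb : Real.cos δ ≤ ‖s‖ := hsre ▸ Complex.re_le_norm s
  have hη2 : 4 * η ^ 2 < 1 := by nlinarith [mul_le_mul hη8 hη8 hη0.le (by norm_num : (0:ℝ) ≤ 1/8)]
  have hsq4 : (2 * η * Real.sin δ) ^ 2 < Real.sin δ ^ 2 := by
    nlinarith [mul_lt_mul_of_pos_right hη2 (mul_pos hsinpos hsinpos)]
  have habs_ub : ‖s‖ < 1 := by
    nlinarith [sq_nonneg (‖s‖ - 1), habs_s_sq, hpyth, hsq4, habs_s_pos]
  have hargmem : Complex.arg s ∈ Set.Icc (-(π / 2)) (π / 2) := by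
    have h1 : |Complex.arg s| < π / 2 :=
      Complex.abs_arg_lt_pi_div_two_iff.mpr (Or.inl (by rw [hsre]; exact hcospos))
    have h2 := abs_lt.mp h1
    exact ⟨h2.1.le, h2.2.le⟩
  have hδmem : -δ ∈ Set.Icc (-(π / 2)) (π / 2) := ⟨by linarith, by linarith⟩
  have hsinlt : Real.sin (-δ) < Real.sin (Complex.arg s) := by
    rw [Real.sin_neg, Complex.sin_arg s, hsim]
    rw [lt_div_iff₀ habs_s_pos]
    nlinarith [mul_le_mul_of_nonneg_left habs_lb hsinpos.le]
  have hargs_lb : -δ < Complex.arg s := by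
    by_contra hcon
    push_neg at hcon
    have hmono := Real.strictMonoOn_sin.monotoneOn hargmem hδmem hcon
    linarith
  have habs_s_lb : 1 - ε < ‖s‖ := by nlinarith
  have hsmem : s ∈ {z : ℂ | |‖z‖ - 1| < ε ∧ 0 < theta z ∧ theta z < 2 * π} := by
    refine ⟨abs_lt.mpr ⟨by linarith, by linarith⟩, ?_, ?_⟩
    · rw [hths]
      have := Complex.neg_pi_lt_arg s
      linarith
    · rw [hths]
      linarith
  have hx1mem : x₁ ∈ {z : ℂ | |‖z‖ - 1| < ε ∧ 0 < theta z ∧ theta z < 2 * π} := by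
    refine ⟨by rw [habs1]; simpa using hε, by rw [hth1]; exact hδ0, by rw [hth1]; linarith⟩
  have hx2mem : x₂ ∈ {z : ℂ | |‖z‖ - 1| < ε ∧ 0 < theta z ∧ theta z < 2 * π} := by
    refine ⟨by rw [habs2]; simpa using hε, by rw [hth2]; linarith, by rw [hth2]; linarith⟩
  have hcombo : (∑ i, (![1 / 2 - η, 1 / 2 + η] i) • (![x₁, x₂] i)) = s := by
    rw [Fin.sum_univ_two]
    simp only [Matrix.cons_val_zero, Matrix.cons_val_one, Matrix.head_cons]
    rw [hx1def, hx2def, hsdef, Complex.real_smul, Complex.real_smul]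
    push_cast
    ring
  have hw := h 2 ![x₁, x₂] ![1 / 2 - η, 1 / 2 + η]
    (by
      intro i
      fin_cases i
      · exact hx1mem
      · exact hx2mem)
    (by
      intro i
      fin_cases i
      · show (0:ℝ) ≤ 1 / 2 - η
        linarith
      · show (0:ℝ) ≤ 1 / 2 + η
        linarith)
    (by rw [Fin.sum_univ_two]; show 1 / 2 - η + (1 / 2 + η) = 1; ring)
    (by rw [hcombo]; exact hsmem)
  clear h
  clear_value x₁ x₂ s
  rw [hcombo, Fin.sum_univ_two] at hw
  simp only [Matrix.cons_val_zero, Matrix.cons_val_one, Matrix.head_cons] at hw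
  rw [habs1, habs2, hth1, hth2, hths] at hw
  clear hcombo hsmem hx1mem hx2mem hx1def hx2def hsdef hx2eq hargmem hδmem hsinlt
  clear hargs_neg himneg hsim hsre harg1 harg2 hth1 hth2 hths habs1 habs2 hη2 hsq4 habs_ub habs_s_lb hsne
  -- final contradiction
  have hsq : Real.cos δ ^ 2 ≤ ‖s‖ ^ 2 := by nlinarith
  have hargmul : a * (-δ) < a * Complex.arg s := by
    exact mul_lt_mul_of_pos_left hargs_lb hapos
  have hw2 : Real.cos δ ^ 2 + a * (2 * π - δ) ≤
      (1 / 2 - η) * (1 ^ 2 + a * δ) + (1 / 2 + η) * (1 ^ 2 + a * (2 * π - δ)) := by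
    nlinarith [hw, hsq, hargmul]
  have hA : Real.sin δ ^ 2 ≤ δ ^ 2 := by nlinarith
  have hB : δ ^ 2 ≤ a / 4 := by nlinarith
  have hπδ : (5:ℝ) / 2 ≤ π - δ := by linarith
  have h1η : (3:ℝ) / 4 ≤ 1 - 2 * η := by linarith
  have hkey2 : a * (5 / 2) * (3 / 4) ≤ a * (π - δ) * (1 - 2 * η) := by
    have h9 : (5:ℝ) / 2 * (3 / 4) ≤ (π - δ) * (1 - 2 * η) :=
      mul_le_mul hπδ h1η (by linarith) (by linarith)
    nlinarith
  have hring : a * (2 * π - δ) - ((1 / 2 - η) * (1 ^ 2 + a * δ) +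
      (1 / 2 + η) * (1 ^ 2 + a * (2 * π - δ)) - 1) = a * (π - δ) * (1 - 2 * η) := by
    ring
  linarith [hw2, hA, hB, hkey2, hring, hpyth]

lemma transport (a ε : ℝ)
    (h : JConvexOn {z : ℂ | |‖z‖ - 1| < ε ∧ 0 < theta z ∧ theta z < 2 * π}
      (fun z => ‖z‖ ^ 2 + a * theta z)) :
    JConvexOn {z : ℂ | |‖z‖ - 1| < ε ∧ 0 < theta z ∧ theta z < 2 * π}
      (fun z => ‖z‖ ^ 2 + (-a) * theta z) := by
  intro k x w hx hw hw1 hmem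
  have hconj : ∀ z : ℂ,
      z ∈ {z : ℂ | |‖z‖ - 1| < ε ∧ 0 < theta z ∧ theta z < 2 * π} →
      (starRingEnd ℂ) z ∈ {z : ℂ | |‖z‖ - 1| < ε ∧ 0 < theta z ∧ theta z < 2 * π} := by
    intro z hz
    refine ⟨by rw [Complex.norm_conj]; exact hz.1, ?_, ?_⟩
    · rw [theta_conj hz.2.2]
      linarith [hz.2.2]
    · rw [theta_conj hz.2.2]
      linarith [theta_pos z]
  have hsum : (∑ i, w i • (starRingEnd ℂ) (x i)) = (starRingEnd ℂ) (∑ i, w i • x i) := by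
    rw [map_sum]
    refine Finset.sum_congr rfl fun i _ => ?_
    simp [Complex.real_smul, map_mul, Complex.conj_ofReal]
  have hkey := h k (fun i => (starRingEnd ℂ) (x i)) w (fun i => hconj _ (hx i)) hw hw1
    (by rw [hsum]; exact hconj _ hmem)
  rw [hsum] at hkey
  simp only at hkey
  rw [Complex.norm_conj, theta_conj hmem.2.2] at hkey
  have hR : (∑ i, w i * (‖(starRingEnd ℂ) (x i)‖ ^ 2 +
      a * theta ((starRingEnd ℂ) (x i))))
      = (∑ i, w i * (‖x i‖ ^ 2 + (-a) * theta (x i))) + 2 * π * a := by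
    have hterm : ∀ i ∈ Finset.univ, w i * (‖(starRingEnd ℂ) (x i)‖ ^ 2 +
        a * theta ((starRingEnd ℂ) (x i)))
        = w i * (‖x i‖ ^ 2 + (-a) * theta (x i)) + w i * (2 * π * a) := by
      intro i _
      rw [Complex.norm_conj, theta_conj (hx i).2.2]
      ring
    rw [Finset.sum_congr rfl hterm, Finset.sum_add_distrib, ← Finset.sum_mul, hw1, one_mul]
  rw [hR] at hkey
  simp only
  linarith [hkey]

/-- On the slit annulus `Ω = {r e^{iθ} : |r - 1| < ε, 0 < θ < 2π}` the function
`f = r² + aθ` (with `0 < |a| < 2(1-ε)²`, `ε` small) is locally convex but not convex. -/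
theorem slit_annulus_locallyConvex_not_convex (a ε : ℝ) (hε : 0 < ε) (hε1 : ε < 1)
    (ha : a ≠ 0) (ha2 : |a| < 2 * (1 - ε) ^ 2) :
    (∀ z ∈ {z : ℂ | |‖z‖ - 1| < ε ∧ 0 < theta z ∧ theta z < 2 * π},
        ∃ δ > (0 : ℝ), JConvexOn
          (Metric.ball z δ ∩
            {z : ℂ | |‖z‖ - 1| < ε ∧ 0 < theta z ∧ theta z < 2 * π})
          (fun z => ‖z‖ ^ 2 + a * theta z)) ∧
    ¬ JConvexOn {z : ℂ | |‖z‖ - 1| < ε ∧ 0 < theta z ∧ theta z < 2 * π}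
        (fun z => ‖z‖ ^ 2 + a * theta z) := by
  constructor
  · intro z hz
    obtain ⟨hz1, hz2, hz3⟩ := hz
    have hargz : Complex.arg z ≠ 0 := arg_ne_zero_of_theta_lt hz3
    have hzne : z ≠ 0 := by
      intro h0
      exact hargz (h0 ▸ Complex.arg_zero)
    have habsz := abs_lt.mp hz1
    set δ₂ : ℝ := if 0 < z.re then |z.im| else ‖z‖ with hδ₂
    have hδ₂0 : 0 < δ₂ := by
      rw [hδ₂]
      split_ifs with hre
      · rcases eq_or_ne z.im 0 with h0 | h0
        · exact absurd (Complex.arg_eq_zero_iff.mpr ⟨hre.le, h0⟩) hargz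
        · exact abs_pos.mpr h0
      · exact norm_pos_iff.mpr hzne
    set δ : ℝ := min (‖z‖ - (1 - ε)) δ₂ with hδdef
    have hδ0 : 0 < δ := lt_min (by linarith [habsz.1]) hδ₂0
    refine ⟨δ, hδ0, ?_⟩
    have hball : ∀ u ∈ Metric.ball z δ, (1 - ε) ≤ ‖u‖ ∧ Complex.arg u ≠ 0 := by
      intro u hu
      rw [Metric.mem_ball, Complex.dist_eq] at hu
      constructor
      · have h1 : ‖z‖ ≤ ‖z - u‖ + ‖u‖ := by
          calc ‖z‖ = ‖(z - u) + u‖ := by ring_nf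
          _ ≤ _ := norm_add_le _ _
        have h2 : ‖z - u‖ = ‖u - z‖ := by
          rw [← norm_neg]
          ring_nf
        have h3 : δ ≤ ‖z‖ - (1 - ε) := min_le_left _ _
        linarith
      · intro hargu
        obtain ⟨hure, huim⟩ := Complex.arg_eq_zero_iff.mp hargu
        have hδ2le : δ ≤ δ₂ := min_le_right _ _
        by_cases hre : 0 < z.re
        · have h4 : |(u - z).im| ≤ ‖u - z‖ := Complex.abs_im_le_norm _
          have h5 : (u - z).im = -z.im := by simp [Complex.sub_im, huim]
          rw [h5, abs_neg] at h4
          have h6 : δ₂ = |z.im| := if_pos hre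
          linarith
        · have h7 : ‖z‖ ^ 2 ≤ ‖u - z‖ ^ 2 := by
            rw [Complex.sq_norm, Complex.sq_norm, Complex.normSq_apply, Complex.normSq_apply,
              Complex.sub_re, Complex.sub_im, huim]
            have hzre : z.re ≤ 0 := not_lt.mp hre
            nlinarith
          have h8 : ‖z‖ ≤ ‖u - z‖ := by
            nlinarith [norm_nonneg (u - z), norm_nonneg z]
          have h9 : δ₂ = ‖z‖ := if_neg hre
          linarith
    have hcvx := key_convex (a := a) (c := 1 - ε) (by linarith) (le_of_lt ha2) z δ
      (fun u hu => ⟨(hball u hu).1, neg_mem_slitPlane (hball u hu).2⟩)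
    intro k x w' hxmem hwnn hwsum hcombo
    have hc1 : Complex.arg (∑ i, w' i • x i) ≠ 0 := arg_ne_zero_of_theta_lt hcombo.2.2.2
    have hc2 : ∀ i, Complex.arg (x i) ≠ 0 := fun i => arg_ne_zero_of_theta_lt (hxmem i).2.2.2
    have hle := hcvx.map_sum_le (fun i _ => hwnn i) (by simpa using hwsum)
      (fun i _ => (hxmem i).1)
    simp only
    rw [show a * theta (∑ i, w' i • x i) = a * (π + Complex.arg (-(∑ i, w' i • x i))) by
      rw [theta_eq hc1]]
    refine le_trans hle (le_of_eq ?_)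
    refine Finset.sum_congr rfl fun i _ => ?_
    rw [smul_eq_mul, theta_eq (hc2 i)]
  · rcases ha.lt_or_gt with hneg | hpos
    · intro hcontra
      have h2 : |(-a)| < 2 * (1 - ε) ^ 2 := by rwa [abs_neg]
      exact not_part (-a) ε hε hε1 (by linarith) (transport a ε hcontra)
    · exact fun hcontra => not_part a ε hε hε1 hpos hcontra
end

section
/- Let Ω ⊆ ℝ² be the union of three rays {re^{iθ} : r ≥ 0} for θ = 0, 2π/3, 4π/3. The function f(re^{iθ}) = (r-1)² is interval convex on Ω (convex on every segment contained in Ω) but not locally convex at 0: for every 0 < r < 2, Jensen's inequality fails for the convex combination 0 = (1/3)(r,0) + (1/3)re^{2πi/3} + (1/3)re^{4πi/3}. -/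
open scoped Real

noncomputable abbrev w1 : ℂ := Complex.exp ((2 * π / 3 : ℝ) * Complex.I)
noncomputable abbrev w2 : ℂ := Complex.exp ((4 * π / 3 : ℝ) * Complex.I)

lemma w1_re : w1.re = -(1/2) := by
  rw [w1, Complex.exp_ofReal_mul_I_re]
  have h : (2*π/3 : ℝ) = π - π/3 := by ring
  rw [h, Real.cos_pi_sub, Real.cos_pi_div_three]

lemma w1_im : w1.im = Real.sqrt 3 / 2 := by
  rw [w1, Complex.exp_ofReal_mul_I_im]
  have h : (2*π/3 : ℝ) = π - π/3 := by ring
  rw [h, Real.sin_pi_sub, Real.sin_pi_div_three]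

lemma w2_re : w2.re = -(1/2) := by
  rw [w2, Complex.exp_ofReal_mul_I_re]
  have h : (4*π/3 : ℝ) = π + π/3 := by ring
  rw [h, Real.cos_add]; simp [Real.cos_pi_div_three]

lemma w2_im : w2.im = -(Real.sqrt 3 / 2) := by
  rw [w2, Complex.exp_ofReal_mul_I_im]
  have h : (4*π/3 : ℝ) = π + π/3 := by ring
  rw [h, Real.sin_add]; simp [Real.sin_pi_div_three]

lemma cos1 : Real.cos (2 * π / 3) = -(1/2) := by
  have h : (2*π/3 : ℝ) = π - π/3 := by ring
  rw [h, Real.cos_pi_sub, Real.cos_pi_div_three]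
lemma sin1 : Real.sin (2 * π / 3) = Real.sqrt 3 / 2 := by
  have h : (2*π/3 : ℝ) = π - π/3 := by ring
  rw [h, Real.sin_pi_sub, Real.sin_pi_div_three]
lemma cos2 : Real.cos (4 * π / 3) = -(1/2) := by
  have h : (4*π/3 : ℝ) = π + π/3 := by ring
  rw [h, Real.cos_add]; simp [Real.cos_pi_div_three]
lemma sin2 : Real.sin (4 * π / 3) = -(Real.sqrt 3 / 2) := by
  have h : (4*π/3 : ℝ) = π + π/3 := by ring
  rw [h, Real.sin_add]; simp [Real.sin_pi_div_three]

lemma w1_abs : ‖w1‖ = 1 := Complex.norm_exp_ofReal_mul_I _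
lemma w2_abs : ‖w2‖ = 1 := Complex.norm_exp_ofReal_mul_I _

set_option maxHeartbeats 1000000 in
lemma key (x y : ℂ)
    (hx : ∃ r : ℝ, 0 ≤ r ∧ (x = r ∨ x = r * w1 ∨ x = r * w2))
    (hy : ∃ r : ℝ, 0 ≤ r ∧ (y = r ∨ y = r * w1 ∨ y = r * w2))
    (hm : ∃ s : ℝ, 0 ≤ s ∧ ((1/2:ℝ) • x + (1/2:ℝ) • y = s ∨
        (1/2:ℝ) • x + (1/2:ℝ) • y = s * w1 ∨ (1/2:ℝ) • x + (1/2:ℝ) • y = s * w2)) :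
    ∃ u : ℂ, ‖u‖ = 1 ∧ ∃ a b : ℝ, 0 ≤ a ∧ 0 ≤ b ∧ x = a * u ∧ y = b * u := by
  obtain ⟨a, ha, hxa⟩ := hx
  obtain ⟨b, hb, hyb⟩ := hy
  have s3 : (0:ℝ) < Real.sqrt 3 := by positivity
  rcases ha.eq_or_lt with ha0 | ha0
  · have hx0 : x = 0 := by rcases hxa with h|h|h <;> simp [h, ← ha0]
    rcases hyb with h|h|h
    · exact ⟨1, by simp, 0, b, le_rfl, hb, by simp [hx0], by simpa using h⟩
    · exact ⟨w1, w1_abs, 0, b, le_rfl, hb, by simp [hx0], h⟩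
    · exact ⟨w2, w2_abs, 0, b, le_rfl, hb, by simp [hx0], h⟩
  rcases hb.eq_or_lt with hb0 | hb0
  · have hy0 : y = 0 := by rcases hyb with h|h|h <;> simp [h, ← hb0]
    rcases hxa with h|h|h
    · exact ⟨1, by simp, a, 0, ha, le_rfl, by simpa using h, by simp [hy0]⟩
    · exact ⟨w1, w1_abs, a, 0, ha, le_rfl, h, by simp [hy0]⟩
    · exact ⟨w2, w2_abs, a, 0, ha, le_rfl, h, by simp [hy0]⟩
  obtain ⟨s, hs, hms⟩ := hm
  rcases hxa with h1|h1|h1 <;> rcases hyb with h2|h2|h2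
  · exact ⟨1, by simp, a, b, ha, hb, by simpa using h1, by simpa using h2⟩
  · exfalso
    rcases hms with hm|hm|hm <;>
    · rw [h1, h2] at hm
      obtain ⟨e1, e2⟩ := Complex.ext_iff.mp hm
      simp [Complex.smul_re, Complex.smul_im, Complex.mul_re, Complex.mul_im,
        cos1, sin1, cos2, sin2] at e1 e2
      nlinarith [mul_pos s3 ha0, mul_pos s3 hb0, mul_nonneg s3.le hs,
        Real.sq_sqrt (by norm_num : (0:ℝ) ≤ 3), mul_pos ha0 hb0]
  · exfalso
    rcases hms with hm|hm|hm <;>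
    · rw [h1, h2] at hm
      obtain ⟨e1, e2⟩ := Complex.ext_iff.mp hm
      simp [Complex.smul_re, Complex.smul_im, Complex.mul_re, Complex.mul_im,
        cos1, sin1, cos2, sin2] at e1 e2
      nlinarith [mul_pos s3 ha0, mul_pos s3 hb0, mul_nonneg s3.le hs,
        Real.sq_sqrt (by norm_num : (0:ℝ) ≤ 3), mul_pos ha0 hb0]
  · exfalso
    rcases hms with hm|hm|hm <;>
    · rw [h1, h2] at hm
      obtain ⟨e1, e2⟩ := Complex.ext_iff.mp hm
      simp [Complex.smul_re, Complex.smul_im, Complex.mul_re, Complex.mul_im,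
        cos1, sin1, cos2, sin2] at e1 e2
      nlinarith [mul_pos s3 ha0, mul_pos s3 hb0, mul_nonneg s3.le hs,
        Real.sq_sqrt (by norm_num : (0:ℝ) ≤ 3), mul_pos ha0 hb0]
  · exact ⟨w1, w1_abs, a, b, ha, hb, h1, h2⟩
  · exfalso
    rcases hms with hm|hm|hm <;>
    · rw [h1, h2] at hm
      obtain ⟨e1, e2⟩ := Complex.ext_iff.mp hm
      simp [Complex.smul_re, Complex.smul_im, Complex.mul_re, Complex.mul_im,
        cos1, sin1, cos2, sin2] at e1 e2
      nlinarith [mul_pos s3 ha0, mul_pos s3 hb0, mul_nonneg s3.le hs,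
        Real.sq_sqrt (by norm_num : (0:ℝ) ≤ 3), mul_pos ha0 hb0]
  · exfalso
    rcases hms with hm|hm|hm <;>
    · rw [h1, h2] at hm
      obtain ⟨e1, e2⟩ := Complex.ext_iff.mp hm
      simp [Complex.smul_re, Complex.smul_im, Complex.mul_re, Complex.mul_im,
        cos1, sin1, cos2, sin2] at e1 e2
      nlinarith [mul_pos s3 ha0, mul_pos s3 hb0, mul_nonneg s3.le hs,
        Real.sq_sqrt (by norm_num : (0:ℝ) ≤ 3), mul_pos ha0 hb0]
  · exfalso
    rcases hms with hm|hm|hm <;>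
    · rw [h1, h2] at hm
      obtain ⟨e1, e2⟩ := Complex.ext_iff.mp hm
      simp [Complex.smul_re, Complex.smul_im, Complex.mul_re, Complex.mul_im,
        cos1, sin1, cos2, sin2] at e1 e2
      nlinarith [mul_pos s3 ha0, mul_pos s3 hb0, mul_nonneg s3.le hs,
        Real.sq_sqrt (by norm_num : (0:ℝ) ≤ 3), mul_pos ha0 hb0]
  · exact ⟨w2, w2_abs, a, b, ha, hb, h1, h2⟩

/-- On the union `Ω` of the three rays at angles `0, 2π/3, 4π/3`, the function
`f(r e^{iθ}) = (r - 1)²` is interval convex (convex on every segment contained in `Ω`)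
but not locally convex at `0`: for every `0 < r < 2`, Jensen's inequality fails for the
convex combination `0 = (1/3) r + (1/3) r e^{2πi/3} + (1/3) r e^{4πi/3}`. -/
theorem three_rays_intervalConvex_not_locallyConvex :
    (∀ x ∈ {z : ℂ | ∃ r : ℝ, 0 ≤ r ∧ (z = (r : ℂ) ∨
        z = (r : ℂ) * Complex.exp ((2 * π / 3 : ℝ) * Complex.I) ∨
        z = (r : ℂ) * Complex.exp ((4 * π / 3 : ℝ) * Complex.I))},
      ∀ y ∈ {z : ℂ | ∃ r : ℝ, 0 ≤ r ∧ (z = (r : ℂ) ∨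
        z = (r : ℂ) * Complex.exp ((2 * π / 3 : ℝ) * Complex.I) ∨
        z = (r : ℂ) * Complex.exp ((4 * π / 3 : ℝ) * Complex.I))},
      segment ℝ x y ⊆ {z : ℂ | ∃ r : ℝ, 0 ≤ r ∧ (z = (r : ℂ) ∨
        z = (r : ℂ) * Complex.exp ((2 * π / 3 : ℝ) * Complex.I) ∨
        z = (r : ℂ) * Complex.exp ((4 * π / 3 : ℝ) * Complex.I))} →
      ∀ l : ℝ, 0 ≤ l → l ≤ 1 →
        (‖l • x + (1 - l) • y‖ - 1) ^ 2 ≤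
          l * (‖x‖ - 1) ^ 2 + (1 - l) * (‖y‖ - 1) ^ 2) ∧
    (∀ r : ℝ, 0 < r → r < 2 →
      (1 / 3) * (‖(r : ℂ)‖ - 1) ^ 2 +
        (1 / 3) * (‖(r : ℂ) * Complex.exp ((2 * π / 3 : ℝ) * Complex.I)‖ - 1) ^ 2 +
        (1 / 3) * (‖(r : ℂ) * Complex.exp ((4 * π / 3 : ℝ) * Complex.I)‖ - 1) ^ 2 <
        (‖(0 : ℂ)‖ - 1) ^ 2) := by
  constructor
  · intro x hx y hy hseg l hl0 hl1
    have hmid : (1/2:ℝ) • x + (1/2:ℝ) • y ∈ segment ℝ x y :=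
      ⟨1/2, 1/2, by norm_num, by norm_num, by norm_num, rfl⟩
    obtain ⟨u, hu, a, b, ha, hb, hxu, hyu⟩ := key x y hx hy (hseg hmid)
    have hcomb : l • x + (1 - l) • y = ((l * a + (1 - l) * b : ℝ) : ℂ) * u := by
      rw [hxu, hyu, Complex.real_smul, Complex.real_smul]
      push_cast
      ring
    have hab : 0 ≤ l * a + (1 - l) * b :=
      add_nonneg (mul_nonneg hl0 ha) (mul_nonneg (by linarith) hb)
    rw [hcomb, hxu, hyu, norm_mul, norm_mul, norm_mul, hu, mul_one, mul_one, mul_one,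
      Complex.norm_real, Complex.norm_real, Complex.norm_real,
      Real.norm_eq_abs, Real.norm_eq_abs, Real.norm_eq_abs,
      abs_of_nonneg hab, abs_of_nonneg ha, abs_of_nonneg hb]
    nlinarith [mul_nonneg (mul_nonneg hl0 (sub_nonneg.2 hl1)) (sq_nonneg (a - b))]
  · intro r hr0 hr2
    simp only [norm_mul, Complex.norm_real, Real.norm_eq_abs, Complex.norm_exp_ofReal_mul_I, mul_one,
      abs_of_pos hr0, norm_zero]
    nlinarith [mul_pos hr0 (by linarith : (0:ℝ) < 2 - r)]
end
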